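/- arXiv:2411.08465 — 8 statements merged into one kernel-verified Lean document; each statement's English description precedes it below -/
import Mathlib

section
/- Let w ∈ S_n, let α be a strictly increasing sequence of length l in A_l(w), let j ≤ l, and let r be a positive integer not in α with r ≤ w^l_j. Then R_{j,r}(α), the increasing rearrangement of α with α_j replaced by r, also lies in A_l(w). -/
/-- The first `l` values of `w`, as a finset of natural numbers. -/
def firstVals {n : ℕ} (w : Equiv.Perm (Fin n)) (l : ℕ) : Finset ℕ :=
  (Finset.univ.filter (fun j : Fin n => (j : ℕ) < l)).image (fun j => (w j : ℕ))

/-- `w^l`: the increasing rearrangement of the first `l` values of `w`. -/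
def wSorted {n : ℕ} (w : Equiv.Perm (Fin n)) (l : ℕ) : List ℕ :=
  (firstVals w l).sort (· ≤ ·)

/-- `A_l(w)`: strictly increasing sequences bounded entrywise by `w^l`. -/
def A {n : ℕ} (w : Equiv.Perm (Fin n)) (l : ℕ) : Set (List ℕ) :=
  {a | a.Chain' (· < ·) ∧ List.Forall₂ (· ≤ ·) a (wSorted w l)}

/-- `R_{j,r}(α)`: replace the `j`-th entry of `α` by `r` and reorder increasingly. -/
def Rrep (j r : ℕ) (a : List ℕ) : List ℕ :=
  List.insertionSort (· ≤ ·) (a.set j r)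

/-- In a `≤`-sorted list, if at least `i+1` elements are `≤ x`, then the `i`-th
entry is `≤ x`. -/
lemma sorted_getElem_le_of_countP {b : List ℕ} (hb : b.Pairwise (· ≤ ·)) (x : ℕ) (i : ℕ)
    (hi : i < b.length) (hc : i + 1 ≤ b.countP (fun y => y ≤ x)) : b[i] ≤ x := by
  by_contra h
  push_neg at h
  have hsplit : b = b.take i ++ b.drop i := (List.take_append_drop i b).symm
  have hdrop0 : (b.drop i).countP (fun y => y ≤ x) = 0 := by
    rw [List.countP_eq_zero]
    intro y hy
    obtain ⟨m, hm, rfl⟩ := List.mem_iff_getElem.mp hy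
    have hm' : i + m < b.length := by
      have : (b.drop i).length = b.length - i := List.length_drop
      omega
    have hgd : (b.drop i)[m] = b[i + m] := List.getElem_drop
    rw [hgd]
    have : b[i] ≤ b[i + m] := by
      rcases Nat.eq_zero_or_pos m with hm0 | hm0
      · simp [hm0]
      · exact List.pairwise_iff_getElem.mp hb i (i + m) hi hm' (by omega)
    simp only [decide_eq_true_eq]
    omega
  have : b.countP (fun y => y ≤ x) ≤ i := by
    conv_lhs => rw [hsplit]
    rw [List.countP_append, hdrop0]
    have := List.countP_le_length (l := b.take i) (p := fun y => decide (y ≤ x))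
    have : (b.take i).length = min i b.length := List.length_take
    omega
  omega

/-- If every element of `s` at an index `≤ i` is `≤ x`, then at least `i+1`
elements of `s` are `≤ x`. -/
lemma countP_ge_of_prefix_le {s : List ℕ} {x : ℕ} {i : ℕ} (hi : i < s.length)
    (h : ∀ m (hm : m < s.length), m ≤ i → s[m] ≤ x) :
    i + 1 ≤ s.countP (fun y => y ≤ x) := by
  have hsplit : s = s.take (i + 1) ++ s.drop (i + 1) := (List.take_append_drop (i + 1) s).symm
  have htake : (s.take (i + 1)).countP (fun y => y ≤ x) = (s.take (i + 1)).length := by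
    rw [List.countP_eq_length]
    intro y hy
    obtain ⟨m, hm, rfl⟩ := List.mem_iff_getElem.mp hy
    have hmlen : m < s.length := by
      have : (s.take (i + 1)).length = min (i + 1) s.length := List.length_take
      omega
    have hmi : m ≤ i := by
      have : (s.take (i + 1)).length = min (i + 1) s.length := List.length_take
      omega
    rw [List.getElem_take]
    simpa using h m hmlen hmi
  have hlen : (s.take (i + 1)).length = i + 1 := by
    rw [List.length_take]; omega
  have : s.countP (fun y => y ≤ x) =
      (s.take (i + 1)).countP (fun y => y ≤ x) + (s.drop (i + 1)).countP (fun y => y ≤ x) := by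
    conv_lhs => rw [hsplit]
    exact List.countP_append
  omega

/-- If `α ∈ A_l(w)`, `r ∉ α` and `r ≤ w^l_j`, then `R_{j,r}(α) ∈ A_l(w)`. -/
theorem stmt6 (n : ℕ) (w : Equiv.Perm (Fin n)) (l : ℕ) (a : List ℕ) (ha : a ∈ A w l)
    (j : ℕ) (hj : j < a.length) (r : ℕ) (hr : r ∉ a)
    (hb : r ≤ (wSorted w l).getD j 0) :
    Rrep j r a ∈ A w l := by
  obtain ⟨hchain, hf2⟩ := ha
  have hapw : List.Pairwise (· < ·) a := List.isChain_iff_pairwise.mp hchain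
  set W : List ℕ := wSorted w l with hW
  obtain ⟨hlenaw, hle⟩ := List.forall₂_iff_get.mp hf2
  set s : List ℕ := a.set j r with hs
  set b : List ℕ := List.insertionSort (· ≤ ·) s with hbdef
  have hperm : b.Perm s := List.perm_insertionSort _ s
  have hbsorted : b.Pairwise (· ≤ ·) := List.pairwise_insertionSort _ s
  have hslen : s.length = a.length := List.length_set
  have hblen : b.length = a.length := by rw [hperm.length_eq, hslen]
  -- getElem description of s
  have hsget : ∀ m (hm : m < s.length), s[m] = if m = j then r else a[m]'(by omega) := by
    intro m hm
    by_cases hmj : m = j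
    · subst hmj; simp [hs]
    · simp [hs, List.getElem_set_ne (Ne.symm (by omega) : j ≠ m), hmj]
  -- nodup of s
  have hanodup : a.Nodup := hapw.nodup
  have hsnodup : s.Nodup := by
    rw [List.nodup_iff_injective_get]
    intro ⟨m1, h1⟩ ⟨m2, h2⟩ heq
    simp only [List.get_eq_getElem] at heq
    rw [hsget m1 h1, hsget m2 h2] at heq
    by_cases e1 : m1 = j <;> by_cases e2 : m2 = j
    · simp [e1, e2]
    · exfalso; simp only [if_pos e1, if_neg e2] at heq
      exact hr (heq ▸ List.getElem_mem _)
    · exfalso; simp only [if_neg e1, if_pos e2] at heq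
      exact hr (heq ▸ List.getElem_mem _)
    · simp only [if_neg e1, if_neg e2] at heq
      have := (List.nodup_iff_injective_get.mp hanodup)
        (a₁ := ⟨m1, by omega⟩) (a₂ := ⟨m2, by omega⟩) (by simpa using heq)
      simpa using this
  have hbnodup : b.Nodup := hperm.nodup_iff.mpr hsnodup
  -- chain' < for b
  have hbchain : b.Chain' (· < ·) := by
    refine List.isChain_iff_pairwise.mpr ?_
    have := hbsorted.and hbnodup
    exact this.imp (fun h => lt_of_le_of_ne h.1 h.2)
  -- a monotone
  have hamono : ∀ m i (hm : m < a.length) (hi : i < a.length), m ≤ i → a[m] ≤ a[i] := by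
    intro m i hm hi hmi
    rcases Nat.lt_or_ge m i with h | h
    · exact le_of_lt (List.pairwise_iff_getElem.mp hapw m i hm hi h)
    · have : m = i := by omega
      subst this; rfl
  -- W sorted
  have hWsorted : W.Pairwise (· ≤ ·) := Finset.pairwise_sort _ _
  have hWmono : ∀ m i (hm : m < W.length) (hi : i < W.length), m ≤ i → W[m] ≤ W[i] := by
    intro m i hm hi hmi
    rcases Nat.lt_or_ge m i with h | h
    · exact List.pairwise_iff_getElem.mp hWsorted m i hm hi h
    · have : m = i := by omega
      subst this; rfl
  have hjW : j < W.length := by omega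
  have hrW : r ≤ W[j] := by rwa [List.getD_eq_getElem W 0 hjW] at hb
  -- a bounded by W pointwise
  have haW : ∀ i (hi : i < a.length), a[i] ≤ W[i]'(by omega) := by
    intro i hi
    have := hle i hi (by omega)
    simpa using this
  -- pointwise bound for b
  have hbW : ∀ i (hi : i < b.length), b[i] ≤ W[i]'(by omega) := by
    intro i hi
    have hia : i < a.length := by omega
    have his : i < s.length := by omega
    rcases Nat.lt_or_ge i j with hij | hij
    · -- i < j : b[i] ≤ a[i] ≤ W[i]
      have hcount : i + 1 ≤ s.countP (fun y => y ≤ a[i]) := by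
        apply countP_ge_of_prefix_le his
        intro m hm hmi
        rw [hsget m hm, if_neg (by omega)]
        exact hamono m i (by omega) hia hmi
      have := sorted_getElem_le_of_countP hbsorted a[i] i hi
        (by rwa [hperm.countP_eq])
      exact le_trans this (haW i hia)
    · -- j ≤ i : b[i] ≤ max a[i] r ≤ W[i]
      have hcount : i + 1 ≤ s.countP (fun y => y ≤ max a[i] r) := by
        apply countP_ge_of_prefix_le his
        intro m hm hmi
        rw [hsget m hm]
        by_cases hmj : m = j
        · simp [hmj, le_max_right]
        · rw [if_neg hmj]
          exact le_trans (hamono m i (by omega) hia hmi) (le_max_left _ _)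
      have hbi : b[i] ≤ max a[i] r := sorted_getElem_le_of_countP hbsorted _ i hi
        (by rwa [hperm.countP_eq])
      have h1 : a[i] ≤ W[i]'(by omega) := haW i hia
      have h2 : r ≤ W[i]'(by omega) := le_trans hrW (hWmono j i hjW (by omega) hij)
      omega
  show b ∈ A w l
  refine ⟨hbchain, ?_⟩
  rw [List.forall₂_iff_get]
  constructor
  · rw [← hW]; omega
  · intro i h1 h2
    simpa using hbW i h1
end

section
/- Let w ∈ S_n and 1 ≤ i < n, and define A_{l,i}(w) := {α ∈ A_l(w) : s_i·α ∉ A_l(w)}, where s_i·α denotes the increasing rearrangement of the entrywise application of the transposition s_i to α. Then A_{l,i}(w) is nonempty if and only if ℓ(s_i w) > ℓ(w) and w⁻¹(i) ≤ l < w⁻¹(i+1). -/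
def invCount {n : ℕ} (w : Equiv.Perm (Fin n)) : ℕ :=
  (Finset.univ.filter (fun p : Fin n × Fin n => p.1 < p.2 ∧ w p.2 < w p.1)).card

def simpleT (n : ℕ) (i : ℕ) (h : i + 1 < n) : Equiv.Perm (Fin n) :=
  Equiv.swap ⟨i, Nat.lt_of_succ_lt h⟩ ⟨i + 1, h⟩

/-- The entrywise action of the transposition `s_i = (i, i+1)` on a sequence,
followed by reordering increasingly. -/
def siAct (i : ℕ) (a : List ℕ) : List ℕ :=
  List.insertionSort (· ≤ ·) (a.map (fun x => Equiv.swap i (i + 1) x))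

/-- `A_{l,i}(w) = {α ∈ A_l(w) : s_i·α ∉ A_l(w)}`. -/
def Ai {n : ℕ} (w : Equiv.Perm (Fin n)) (l : ℕ) (i : ℕ) : Set (List ℕ) :=
  {a | a ∈ A w l ∧ siAct i a ∉ A w l}

namespace Stmt7Aux

open List

noncomputable abbrev sw (i : ℕ) : ℕ → ℕ := fun x => Equiv.swap i (i + 1) x

lemma sw_of_ne {i x : ℕ} (h1 : x ≠ i) (h2 : x ≠ i + 1) : sw i x = x :=
  Equiv.swap_apply_of_ne_of_ne h1 h2

lemma sw_left (i : ℕ) : sw i i = i + 1 := Equiv.swap_apply_left _ _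
lemma sw_right (i : ℕ) : sw i (i + 1) = i := Equiv.swap_apply_right _ _

lemma forall₂_le_trans : ∀ {a b c : List ℕ}, Forall₂ (· ≤ ·) a b → Forall₂ (· ≤ ·) b c →
    Forall₂ (· ≤ ·) a c := by
  intro a b c h1 h2
  induction h1 generalizing c with
  | nil => cases h2; exact .nil
  | cons hxy _ ih =>
    cases h2 with
    | cons hyz h2' => exact .cons (le_trans hxy hyz) (ih h2')

lemma countP_le_of_forall₂ (i : ℕ) : ∀ {a b : List ℕ}, Forall₂ (· ≤ ·) a b →
    a.countP (fun x => decide (i < x)) ≤ b.countP (fun x => decide (i < x)) := by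
  intro a b h
  induction h with
  | nil => simp
  | @cons x y t u hxy _ ih =>
    simp only [countP_cons]
    by_cases hy : i < y
    · by_cases hx : i < x <;> simp [hx, hy] <;> omega
    · have hx : ¬ i < x := by omega
      simp [hx, hy]; exact ih

lemma countP_map_sw (i : ℕ) : ∀ (a : List ℕ), (i + 1) ∉ a →
    a.countP (fun x => decide (i < sw i x)) = a.countP (fun x => decide (i < x)) + a.count i := by
  intro a
  induction a with
  | nil => simp
  | cons x t ih =>
    intro h
    have hx1 : x ≠ i + 1 := fun hh => h (hh ▸ mem_cons_self)
    have ht : (i + 1) ∉ t := fun hh => h (mem_cons_of_mem _ hh)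
    by_cases hxi : x = i
    · subst hxi
      simp [countP_cons, count_cons, sw_left, ih ht]
      omega
    · have : sw i x = x := sw_of_ne hxi hx1
      simp [countP_cons, count_cons, this, ih ht, hxi]
      omega

lemma exists_of_not_forall₂ (f : ℕ → ℕ) : ∀ {a b : List ℕ}, Forall₂ (· ≤ ·) a b →
    ¬ Forall₂ (· ≤ ·) (a.map f) b → ∃ x ∈ a, ∃ y ∈ b, x ≤ y ∧ y < f x := by
  intro a b h
  induction h with
  | nil => intro hn; exact absurd .nil hn
  | @cons x y t u hxy _ ih =>
    intro hn
    by_cases hfy : f x ≤ y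
    · have : ¬ Forall₂ (· ≤ ·) (t.map f) u := fun hc => hn (by simpa using Forall₂.cons hfy hc)
      obtain ⟨x', hx', y', hy', h1, h2⟩ := ih this
      exact ⟨x', mem_cons_of_mem _ hx', y', mem_cons_of_mem _ hy', h1, h2⟩
    · exact ⟨x, mem_cons_self, y, mem_cons_self, hxy, by omega⟩

lemma forall₂_map_sw_of_ge (i : ℕ) : ∀ {a b : List ℕ}, Forall₂ (· ≤ ·) a b → (i + 1) ∉ a →
    (∀ y ∈ b, i + 1 ≤ y) → Forall₂ (· ≤ ·) (a.map (sw i)) b := by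
  intro a b h
  induction h with
  | nil => intros; exact .nil
  | @cons x y t u hxy _ ih =>
    intro hna hb
    have hx1 : x ≠ i + 1 := fun hh => hna (hh ▸ mem_cons_self)
    refine Forall₂.cons ?_ (ih (fun hh => hna (mem_cons_of_mem _ hh))
      (fun z hz => hb z (mem_cons_of_mem _ hz)))
    by_cases hxi : x = i
    · subst hxi; rw [sw_left]; exact hb y (mem_cons_self)
    · rw [sw_of_ne hxi hx1]; exact hxy

lemma forall₂_map_sw (i : ℕ) : ∀ (a b : List ℕ), Forall₂ (· ≤ ·) a b → a.Chain' (· < ·) →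
    b.Chain' (· < ·) → (i + 1) ∉ a → (i + 1) ∈ b → Forall₂ (· ≤ ·) (a.map (sw i)) b := by
  intro a
  induction a with
  | nil => intro b h _ _ _ hb; cases h; simp at hb
  | cons x t ih =>
    intro b h ha hb hna hmb
    cases h with
    | @cons _ y _ u hxy h' =>
      have hxt : ∀ z ∈ t, x < z := (pairwise_cons.1 (isChain_iff_pairwise.1 ha)).1
      have hyu : ∀ z ∈ u, y < z := (pairwise_cons.1 (isChain_iff_pairwise.1 hb)).1
      have hx1 : x ≠ i + 1 := fun hh => hna (hh ▸ mem_cons_self)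
      have hnt : (i + 1) ∉ t := fun hh => hna (mem_cons_of_mem _ hh)
      by_cases hxi : x = i
      · have hyne : y ≠ i := by
          intro heq
          have hmb' : (i + 1) ∈ u := by
            rcases mem_cons.1 hmb with hh | hh
            · omega
            · exact hh
          cases h' with
          | nil => simp at hmb'
          | @cons z v t' u' hzv h'' =>
            have hz : x < z := hxt z (mem_cons_self)
            have hz1 : z ≠ i + 1 := fun hh => hnt (hh ▸ mem_cons_self)
            have hvu : ∀ q ∈ u', v < q :=
              (pairwise_cons.1 (isChain_iff_pairwise.1 hb.tail)).1
            rcases mem_cons.1 hmb' with hh | hh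
            · omega
            · have := hvu _ hh; omega
        have hy1 : i + 1 ≤ y := by omega
        refine Forall₂.cons (by rw [hxi, sw_left]; exact hy1) ?_
        have hmap : t.map (sw i) = t := by
          have hfix : ∀ z ∈ t, sw i z = z := fun z hz =>
            sw_of_ne (by have := hxt z hz; omega) (fun hh => hnt (hh ▸ hz))
          rw [List.map_congr_left hfix]; simp
        rw [hmap]; exact h'
      · refine Forall₂.cons (by rw [sw_of_ne hxi hx1]; exact hxy) ?_
        by_cases hmu : (i + 1) ∈ u
        · exact ih u h' ha.tail hb.tail hnt hmu
        · have hy : y = i + 1 := by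
            rcases mem_cons.1 hmb with hh | hh
            · omega
            · exact absurd hh hmu
          subst hy
          exact forall₂_map_sw_of_ge i h' hnt (fun z hz => le_of_lt (hyu z hz))

lemma pairwise_map_sw (i : ℕ) (a : List ℕ) (ha : a.Pairwise (· < ·))
    (hcase : i ∉ a ∨ (i + 1) ∉ a) : (a.map (sw i)).Pairwise (· < ·) := by
  rw [List.pairwise_map]
  refine ha.imp_of_mem ?_
  intro x y hx hy hxy
  by_cases hxi : x = i
  · have h1 : (i + 1) ∉ a := hcase.resolve_left (fun hh => hh (hxi ▸ hx))
    have hy1 : y ≠ i + 1 := fun hh => h1 (hh ▸ hy)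
    rw [hxi, sw_left, sw_of_ne (show y ≠ i by omega) hy1]; omega
  by_cases hxi1 : x = i + 1
  · rw [hxi1, sw_right, sw_of_ne (show y ≠ i by omega) (show y ≠ i + 1 by omega)]; omega
  by_cases hyi : y = i
  · rw [hyi, sw_of_ne hxi hxi1, sw_left]; omega
  by_cases hyi1 : y = i + 1
  · rw [hyi1, sw_of_ne hxi hxi1, sw_right]; omega
  rw [sw_of_ne hxi hxi1, sw_of_ne hyi hyi1]; omega

lemma map_sw_perm (i : ℕ) (a : List ℕ) (hnd : a.Nodup) (hiff : i ∈ a ↔ (i + 1) ∈ a) :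
    a.map (sw i) ~ a := by
  rw [List.perm_iff_count]
  intro x
  have hswinj : Function.Injective (sw i) := fun p q hh => by
    simpa using congrArg (Equiv.swap i (i + 1)).symm hh
  have h1 : (a.map (sw i)).count x = a.count (sw i x) := by
    conv_lhs => rw [show x = sw i (sw i x) by simp [sw]]
    exact List.count_map_of_injective a (sw i) hswinj _
  rw [h1]
  have hcnt : ∀ y : ℕ, (y ∈ a ↔ (sw i y) ∈ a) → a.count (sw i y) = a.count y := by
    intro y hmem
    by_cases hm : y ∈ a
    · rw [count_eq_one_of_mem hnd (hmem.1 hm), count_eq_one_of_mem hnd hm]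
    · rw [count_eq_zero_of_not_mem (fun hh => hm (hmem.2 hh)), count_eq_zero_of_not_mem hm]
  apply hcnt
  by_cases h1' : x = i
  · rw [h1', sw_left]; exact hiff
  by_cases h2' : x = i + 1
  · rw [h2', sw_right]; exact hiff.symm
  rw [sw_of_ne h1' h2']

lemma invCount_lt_iff {n : ℕ} (w : Equiv.Perm (Fin n)) (i : ℕ) (h : i + 1 < n) :
    invCount w < invCount (simpleT n i h * w) ↔
      w⁻¹ ⟨i, Nat.lt_of_succ_lt h⟩ < w⁻¹ ⟨i + 1, h⟩ := by
  set a : Fin n := ⟨i, Nat.lt_of_succ_lt h⟩ with ha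
  set b : Fin n := ⟨i + 1, h⟩ with hb
  clear_value a b
  have hav : (a : ℕ) = i := by rw [ha]
  have hbv : (b : ℕ) = i + 1 := by rw [hb]
  clear ha hb
  have hab : a < b := by rw [Fin.lt_def, hav, hbv]; omega
  have hma : (⟨i, Nat.lt_of_succ_lt h⟩ : Fin n) = a := Fin.ext hav.symm
  have hmb : (⟨i + 1, h⟩ : Fin n) = b := Fin.ext hbv.symm
  have hcmp : ∀ x y : Fin n, ¬(x = a ∧ y = b) → ¬(x = b ∧ y = a) →
      (Equiv.swap a b y < Equiv.swap a b x ↔ y < x) := by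
    intro x y h1 h2
    rw [Fin.lt_def, Fin.lt_def]
    by_cases hxa : x = a
    · by_cases hya : y = a
      · rw [hxa, hya]
        exact iff_of_false (lt_irrefl _) (lt_irrefl _)
      · by_cases hyb : y = b
        · exact absurd ⟨hxa, hyb⟩ h1
        · have hy1 : (y : ℕ) ≠ i := fun hh => hya (Fin.ext (hh.trans hav.symm))
          rw [hxa, Equiv.swap_apply_left, Equiv.swap_apply_of_ne_of_ne hya hyb]
          omega
    · by_cases hxb : x = b
      · by_cases hya : y = a
        · exact absurd ⟨hxb, hya⟩ h2
        · by_cases hyb : y = b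
          · rw [hxb, hyb]
            exact iff_of_false (lt_irrefl _) (lt_irrefl _)
          · have hy1 : (y : ℕ) ≠ i := fun hh => hya (Fin.ext (hh.trans hav.symm))
            rw [hxb, Equiv.swap_apply_right, Equiv.swap_apply_of_ne_of_ne hya hyb]
            omega
      · have hx1 : (x : ℕ) ≠ i := fun hh => hxa (Fin.ext (hh.trans hav.symm))
        have hx2 : (x : ℕ) ≠ i + 1 := fun hh => hxb (Fin.ext (hh.trans hbv.symm))
        by_cases hya : y = a
        · rw [hya, Equiv.swap_apply_left, Equiv.swap_apply_of_ne_of_ne hxa hxb]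
          omega
        · by_cases hyb : y = b
          · rw [hyb, Equiv.swap_apply_right, Equiv.swap_apply_of_ne_of_ne hxa hxb]
            omega
          · rw [Equiv.swap_apply_of_ne_of_ne hxa hxb, Equiv.swap_apply_of_ne_of_ne hya hyb]
  have hT : simpleT n i h = Equiv.swap a b := by unfold simpleT; rw [hma, hmb]
  have hinv2 : invCount (simpleT n i h * w) =
      (Finset.univ.filter
        (fun p : Fin n × Fin n =>
          p.1 < p.2 ∧ Equiv.swap a b (w p.2) < Equiv.swap a b (w p.1))).card := by
    unfold invCount
    simp only [hT, Equiv.Perm.mul_apply]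
  have key : ∀ p : Fin n × Fin n, p ≠ (w⁻¹ a, w⁻¹ b) → p ≠ (w⁻¹ b, w⁻¹ a) →
      ((p.1 < p.2 ∧ Equiv.swap a b (w p.2) < Equiv.swap a b (w p.1)) ↔
        (p.1 < p.2 ∧ w p.2 < w p.1)) := by
    intro p h1 h2
    refine and_congr_right fun _ => ?_
    refine hcmp (w p.1) (w p.2) ?_ ?_
    · rintro ⟨e1, e2⟩
      exact h1 (Prod.ext (by rw [← e1, Equiv.Perm.coe_inv, Equiv.symm_apply_apply])
        (by rw [← e2, Equiv.Perm.coe_inv, Equiv.symm_apply_apply]))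
    · rintro ⟨e1, e2⟩
      exact h2 (Prod.ext (by rw [← e1, Equiv.Perm.coe_inv, Equiv.symm_apply_apply])
        (by rw [← e2, Equiv.Perm.coe_inv, Equiv.symm_apply_apply]))
  rw [hinv2]
  rcases lt_trichotomy (w⁻¹ a) (w⁻¹ b) with hlt | heq | hgt
  · refine iff_of_true ?_ hlt
    have hset : (Finset.univ.filter
        (fun p : Fin n × Fin n =>
          p.1 < p.2 ∧ Equiv.swap a b (w p.2) < Equiv.swap a b (w p.1)))
        = insert (w⁻¹ a, w⁻¹ b)
          (Finset.univ.filter (fun p : Fin n × Fin n => p.1 < p.2 ∧ w p.2 < w p.1)) := by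
      ext p
      simp only [Finset.mem_insert, Finset.mem_filter, Finset.mem_univ, true_and]
      by_cases hp1 : p = (w⁻¹ a, w⁻¹ b)
      · subst hp1
        refine iff_of_true ⟨hlt, ?_⟩ (Or.inl rfl)
        simp only [Equiv.Perm.coe_inv, Equiv.apply_symm_apply, Equiv.swap_apply_left, Equiv.swap_apply_right]
        exact hab
      · by_cases hp2 : p = (w⁻¹ b, w⁻¹ a)
        · subst hp2
          have hnlt : ¬ (w⁻¹ b < w⁻¹ a) := not_lt.2 hlt.le
          refine iff_of_false (fun hc => hnlt hc.1) ?_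
          rintro (hc | hc)
          · exact hp1 hc
          · exact hnlt hc.1
        · rw [key p hp1 hp2]
          simp only [hp1, false_or]
    rw [hset, Finset.card_insert_of_notMem]
    · exact Nat.lt_succ_self _
    · simp only [Finset.mem_filter, Finset.mem_univ, true_and]
      rintro ⟨-, hc⟩
      simp only [Equiv.Perm.coe_inv, Equiv.apply_symm_apply] at hc
      exact not_lt.2 hab.le hc
  · exact absurd (congrArg (fun z : Fin n => ((w z : Fin n) : ℕ)) heq)
      (by simp [hav, hbv])
  · refine iff_of_false ?_ (not_lt.2 hgt.le)
    have hset : (Finset.univ.filter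
        (fun p : Fin n × Fin n =>
          p.1 < p.2 ∧ Equiv.swap a b (w p.2) < Equiv.swap a b (w p.1)))
        = (Finset.univ.filter
            (fun p : Fin n × Fin n => p.1 < p.2 ∧ w p.2 < w p.1)).erase (w⁻¹ b, w⁻¹ a) := by
      ext p
      simp only [Finset.mem_erase, Finset.mem_filter, Finset.mem_univ, true_and]
      by_cases hp2 : p = (w⁻¹ b, w⁻¹ a)
      · subst hp2
        refine iff_of_false ?_ (fun hc => hc.1 rfl)
        rintro ⟨-, hc⟩
        simp only [Equiv.Perm.coe_inv, Equiv.apply_symm_apply, Equiv.swap_apply_left,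
          Equiv.swap_apply_right] at hc
        exact not_lt.2 hab.le hc
      · by_cases hp1 : p = (w⁻¹ a, w⁻¹ b)
        · subst hp1
          have hnlt : ¬ (w⁻¹ a < w⁻¹ b) := not_lt.2 hgt.le
          exact iff_of_false (fun hc => hnlt hc.1) (fun hc => hnlt hc.2.1)
        · rw [key p hp1 hp2]
          exact ⟨fun hh => ⟨hp2, hh⟩, fun hh => hh.2⟩
    have hmem : (w⁻¹ b, w⁻¹ a) ∈
        Finset.univ.filter (fun p : Fin n × Fin n => p.1 < p.2 ∧ w p.2 < w p.1) := by
      simp only [Finset.mem_filter, Finset.mem_univ, true_and]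
      exact ⟨hgt, by simpa using hab⟩
    rw [hset, Finset.card_erase_of_mem hmem]
    unfold invCount
    omega

lemma mem_firstVals_iff {n : ℕ} (w : Equiv.Perm (Fin n)) (l : ℕ) (x : Fin n) :
    (x : ℕ) ∈ firstVals w l ↔ ((w⁻¹ x : Fin n) : ℕ) < l := by
  unfold firstVals
  simp only [Finset.mem_image, Finset.mem_filter, Finset.mem_univ, true_and]
  constructor
  · rintro ⟨j, hj, hjx⟩
    have hwj : w j = x := Fin.ext hjx
    rw [← hwj, Equiv.Perm.coe_inv, Equiv.symm_apply_apply]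
    exact hj
  · intro hx
    exact ⟨w⁻¹ x, hx, by simp⟩

lemma siAct_eq (i : ℕ) (a : List ℕ) (hpw : (a.map (sw i)).Pairwise (· < ·)) :
    siAct i a = a.map (sw i) := by
  unfold siAct
  exact List.Pairwise.insertionSort_eq (hpw.imp le_of_lt)

end Stmt7Aux

open Stmt7Aux List

/-- `A_{l,i}(w)` is nonempty iff `ℓ(s_i w) > ℓ(w)` and `w⁻¹(i) ≤ l < w⁻¹(i+1)`
(written 0-based: the position of `i` is `< l` and the position of `i+1` is `≥ l`). -/
theorem stmt7 (n : ℕ) (w : Equiv.Perm (Fin n)) (i : ℕ) (h : i + 1 < n) (l : ℕ) :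
    (Ai w l i).Nonempty ↔
      (invCount w < invCount (simpleT n i h * w) ∧
        (w⁻¹ ⟨i, Nat.lt_of_succ_lt h⟩ : ℕ) < l ∧ l ≤ (w⁻¹ ⟨i + 1, h⟩ : ℕ)) := by
  have hLch : (wSorted w l).Chain' (· < ·) :=
    isChain_iff_pairwise.2 (Finset.sortedLT_sort _).pairwise
  have hLpw : (wSorted w l).Pairwise (· < ·) := (Finset.sortedLT_sort _).pairwise
  have hmemL : ∀ x : ℕ, x ∈ wSorted w l ↔ x ∈ firstVals w l := fun x => Finset.mem_sort _
  have hkey : (Ai w l i).Nonempty ↔ (i ∈ firstVals w l ∧ (i + 1) ∉ firstVals w l) := by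
    constructor
    · rintro ⟨a, ⟨hch, hf⟩, hna⟩
      have hpw : a.Pairwise (· < ·) := isChain_iff_pairwise.1 hch
      have hnd : a.Nodup := hpw.imp ne_of_lt
      by_cases hm1 : (i + 1) ∈ a
      · exfalso
        apply hna
        by_cases hm0 : i ∈ a
        · have hperm : a.map (sw i) ~ a := map_sw_perm i a hnd (iff_of_true hm0 hm1)
          have heq : siAct i a = a :=
            List.Perm.eq_of_pairwise' (pairwise_insertionSort _ _) (hpw.imp le_of_lt)
              ((perm_insertionSort _ _).trans hperm)
          rw [heq]; exact ⟨hch, hf⟩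
        · have hpw' := pairwise_map_sw i a hpw (Or.inl hm0)
          rw [siAct_eq i a hpw']
          refine ⟨isChain_iff_pairwise.2 hpw', forall₂_le_trans ?_ hf⟩
          rw [List.forall₂_map_left_iff]
          refine List.forall₂_same.2 fun x hx => ?_
          by_cases hx1 : x = i + 1
          · rw [hx1, sw_right]; omega
          · exact le_of_eq (sw_of_ne (fun hh : x = i => hm0 (hh ▸ hx)) hx1)
      · by_cases hm0 : i ∈ a
        · -- main case
          have hpw' := pairwise_map_sw i a hpw (Or.inr hm1)
          have heq : siAct i a = a.map (sw i) := siAct_eq i a hpw'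
          have hnf : ¬ Forall₂ (· ≤ ·) (a.map (sw i)) (wSorted w l) := by
            intro hc
            exact hna (heq ▸ (⟨isChain_iff_pairwise.2 hpw', hc⟩ : _ ∈ A w l))
          obtain ⟨x, hx, y, hy, hxy, hylt⟩ := exists_of_not_forall₂ (sw i) hf hnf
          have hx1 : x ≠ i + 1 := fun hh => hm1 (hh ▸ hx)
          have hxi : x = i := by
            by_contra hc
            rw [sw_of_ne hc hx1] at hylt
            omega
          have hyi : y = i := by
            rw [hxi, sw_left] at hylt
            omega
          refine ⟨(hmemL i).1 (hyi ▸ hy), fun hmem => ?_⟩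
          exact hnf (forall₂_map_sw i a (wSorted w l) hf hch hLch hm1 ((hmemL _).2 hmem))
        · exfalso
          apply hna
          have hperm : a.map (sw i) ~ a := map_sw_perm i a hnd (iff_of_false hm0 hm1)
          have heq : siAct i a = a :=
            List.Perm.eq_of_pairwise' (pairwise_insertionSort _ _) (hpw.imp le_of_lt)
              ((perm_insertionSort _ _).trans hperm)
          rw [heq]; exact ⟨hch, hf⟩
    · rintro ⟨hmi, hmi1⟩
      refine ⟨wSorted w l, ⟨hLch, List.forall₂_same.2 fun x _ => le_refl x⟩, ?_⟩
      rintro ⟨-, hf2⟩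
      have hiL : i ∈ wSorted w l := (hmemL i).2 hmi
      have hi1L : (i + 1) ∉ wSorted w l := fun hh => hmi1 ((hmemL _).1 hh)
      have h1 : (siAct i (wSorted w l)).countP (fun x => decide (i < x)) =
          ((wSorted w l).map (sw i)).countP (fun x => decide (i < x)) :=
        (perm_insertionSort _ _).countP_eq _
      have h2 : ((wSorted w l).map (sw i)).countP (fun x => decide (i < x)) =
          (wSorted w l).countP (fun x => decide (i < sw i x)) := List.countP_map
      have h3 := countP_map_sw i (wSorted w l) hi1L
      have h4 := countP_le_of_forall₂ i hf2
      have h5 : 0 < (wSorted w l).count i := List.count_pos_iff.2 hiL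
      omega
  rw [hkey, invCount_lt_iff w i h]
  constructor
  · rintro ⟨hmi, hmi1⟩
    have p1 : ((w⁻¹ ⟨i, Nat.lt_of_succ_lt h⟩ : Fin n) : ℕ) < l :=
      (mem_firstVals_iff w l ⟨i, Nat.lt_of_succ_lt h⟩).1 hmi
    have p2 : ¬ ((w⁻¹ ⟨i + 1, h⟩ : Fin n) : ℕ) < l :=
      fun hc => hmi1 ((mem_firstVals_iff w l ⟨i + 1, h⟩).2 hc)
    exact ⟨by rw [Fin.lt_def]; omega, p1, by omega⟩
  · rintro ⟨-, p1, p2⟩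
    exact ⟨(mem_firstVals_iff w l ⟨i, Nat.lt_of_succ_lt h⟩).2 p1,
      fun hc => by have := (mem_firstVals_iff w l ⟨i + 1, h⟩).1 hc; omega⟩
end

section
/- Let w ∈ S_n and 1 ≤ i < n with ℓ(s_i w) > ℓ(w), and suppose w⁻¹(i) ≤ l < w⁻¹(i+1), so there is an index j with w^l_j = i. Then A_{l,i}(w) := {α ∈ A_l(w) : s_i·α ∉ A_l(w)} equals exactly the set of α ∈ A_l(w) with α_j = i and such that i+1 does not appear in α. -/
private lemma siAct_eq_of (i : ℕ) {a b : List ℕ}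
    (hb : b.Pairwise (· ≤ ·))
    (hp : (a.map (fun x => Equiv.swap i (i + 1) x)).Perm b) :
    siAct i a = b :=
  List.Perm.eq_of_pairwise' (List.pairwise_insertionSort _ _) hb
    ((List.perm_insertionSort _ _).trans hp)

private lemma siAct_fix (i : ℕ) {a : List ℕ} (ha : a.Pairwise (· < ·))
    (hiff : i ∈ a ↔ i + 1 ∈ a) : siAct i a = a := by
  apply siAct_eq_of i (ha.imp le_of_lt)
  have hnd : a.Nodup := ha.nodup
  rw [List.perm_ext_iff_of_nodup (hnd.map (Equiv.swap i (i + 1)).injective) hnd]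
  intro x
  simp only [List.mem_map]
  constructor
  · rintro ⟨y, hy, rfl⟩
    rcases eq_or_ne y i with rfl | h1
    · rw [Equiv.swap_apply_left]; exact hiff.1 hy
    rcases eq_or_ne y (i + 1) with rfl | h2
    · rw [Equiv.swap_apply_right]; exact hiff.2 hy
    · rwa [Equiv.swap_apply_of_ne_of_ne h1 h2]
  · intro hx
    refine ⟨Equiv.swap i (i + 1) x, ?_, Equiv.swap_apply_self _ _ _⟩
    rcases eq_or_ne x i with rfl | h1
    · rw [Equiv.swap_apply_left]; exact hiff.1 hx
    rcases eq_or_ne x (i + 1) with rfl | h2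
    · rw [Equiv.swap_apply_right]; exact hiff.2 hx
    · rwa [Equiv.swap_apply_of_ne_of_ne h1 h2]

private lemma siAct_map (i : ℕ) {a : List ℕ} {f : ℕ → ℕ}
    (hf : ∀ x ∈ a, Equiv.swap i (i + 1) x = f x)
    (hs : (a.map f).Pairwise (· ≤ ·)) : siAct i a = a.map f := by
  apply siAct_eq_of i hs
  rw [List.map_congr_left hf]

/-- strict sortedness of `a.map (i ↦ i+1)` when `i+1 ∉ a`. -/
private lemma mapf_sorted (i : ℕ) {a : List ℕ} (hsa : a.Pairwise (· < ·))
    (hi1 : (i + 1) ∉ a) :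
    (a.map (fun x => if x = i then i + 1 else x)).Pairwise (· < ·) := by
  apply List.pairwise_iff_getElem.mpr
  intro p q hp hq hpq
  simp only [List.length_map] at hp hq
  simp only [List.getElem_map]
  have hlt : a[p] < a[q] := List.pairwise_iff_getElem.mp hsa p q hp hq hpq
  have hq1 : a[q] ≠ i + 1 := by
    intro hc; apply hi1; rw [← hc]; exact List.getElem_mem hq
  have hp1 : a[p] ≠ i + 1 := by
    intro hc; apply hi1; rw [← hc]; exact List.getElem_mem hp
  split_ifs with e1 e2 e2 <;> omega

/-- strict sortedness of `a.map (i+1 ↦ i)` when `i ∉ a`. -/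
private lemma mapg_sorted (i : ℕ) {a : List ℕ} (hsa : a.Pairwise (· < ·))
    (hia : i ∉ a) :
    (a.map (fun x => if x = i + 1 then i else x)).Pairwise (· < ·) := by
  apply List.pairwise_iff_getElem.mpr
  intro p q hp hq hpq
  simp only [List.length_map] at hp hq
  simp only [List.getElem_map]
  have hlt : a[p] < a[q] := List.pairwise_iff_getElem.mp hsa p q hp hq hpq
  have hq1 : a[q] ≠ i := by
    intro hc; apply hia; rw [← hc]; exact List.getElem_mem hq
  have hp1 : a[p] ≠ i := by
    intro hc; apply hia; rw [← hc]; exact List.getElem_mem hp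
  split_ifs with e1 e2 e2 <;> omega

/-- Under `ℓ(s_i w) > ℓ(w)` and `w⁻¹(i) ≤ l < w⁻¹(i+1)`, with `j` the index where
`w^l_j = i`, the set `A_{l,i}(w)` is exactly the set of `α ∈ A_l(w)` with `α_j = i`
in which `i+1` does not appear. -/
theorem stmt8 (n : ℕ) (w : Equiv.Perm (Fin n)) (i : ℕ) (h : i + 1 < n) (l : ℕ)
    (hlen : invCount w < invCount (simpleT n i h * w))
    (h1 : (w⁻¹ ⟨i, Nat.lt_of_succ_lt h⟩ : ℕ) < l) (h2 : l ≤ (w⁻¹ ⟨i + 1, h⟩ : ℕ))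
    (j : ℕ) (hj : (wSorted w l).getD j (i + 1) = i) :
    Ai w l i = {a | a ∈ A w l ∧ a.getD j (i + 1) = i ∧ (i + 1) ∉ a} := by
  classical
  set W := wSorted w l with hWdef
  have hWs : W.Pairwise (· < ·) := (Finset.sortedLT_sort _).pairwise
  have hi1W : (i + 1) ∉ W := by
    rw [hWdef, wSorted, Finset.mem_sort, firstVals, Finset.mem_image]
    rintro ⟨k, hk, hwk⟩
    simp only [Finset.mem_filter, Finset.mem_univ, true_and] at hk
    have hk2 : k = w⁻¹ ⟨i + 1, h⟩ := by
      have : w k = ⟨i + 1, h⟩ := Fin.ext hwk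
      rw [← this, Equiv.Perm.inv_def, Equiv.symm_apply_apply]
    rw [hk2] at hk
    omega
  have hjlt : j < W.length := by
    by_contra hc
    rw [List.getD_eq_default _ _ (le_of_not_gt hc)] at hj
    omega
  have hWj : W[j]'hjlt = i := by
    rwa [List.getD_eq_getElem _ _ hjlt] at hj
  have hWmono : ∀ p q (hp : p < W.length) (hq : q < W.length), p < q →
      W[p]'hp < W[q]'hq := fun p q hp hq hpq =>
    List.pairwise_iff_getElem.mp hWs p q hp hq hpq
  ext a
  simp only [Ai, Set.mem_setOf_eq, and_congr_right_iff]
  intro haA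
  obtain ⟨hch, hf2⟩ := haA
  have hsa : a.Pairwise (· < ·) := List.isChain_iff_pairwise.mp hch
  have hlen' : a.length = W.length := hf2.length_eq
  have hbd : ∀ k (hk : k < a.length), a[k]'hk ≤ W[k]'(hlen' ▸ hk) := by
    rw [List.forall₂_iff_get] at hf2
    intro k hk
    simpa using hf2.2 k hk (hlen' ▸ hk)
  have hamono : ∀ p q (hp : p < a.length) (hq : q < a.length), p < q →
      a[p]'hp < a[q]'hq := fun p q hp hq hpq =>
    List.pairwise_iff_getElem.mp hsa p q hp hq hpq
  have hja : j < a.length := hlen' ▸ hjlt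
  rw [List.getD_eq_getElem _ _ hja]
  set f : ℕ → ℕ := fun x => if x = i then i + 1 else x with hfdef
  have hfi : f i = i + 1 := by simp [hfdef]
  have hfx : ∀ x, x ≠ i → f x = x := fun x hx => by simp [hfdef, hx]
  have hDmap : i ∈ a → (i + 1) ∉ a → siAct i a = a.map f := by
    intro hia hi1a
    apply siAct_map
    · intro x hx
      rcases eq_or_ne x i with rfl | hxi
      · rw [Equiv.swap_apply_left, hfi]
      · rw [Equiv.swap_apply_of_ne_of_ne hxi (fun hc => hi1a (by rw [← hc]; exact hx)), hfx x hxi]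
    · exact (mapf_sorted i hsa hi1a).imp le_of_lt
  constructor
  · -- siAct i a ∉ A → a[j] = i ∧ i+1 ∉ a
    intro hns
    by_contra hcon
    apply hns
    by_cases hi1 : (i + 1) ∈ a
    · by_cases hia : i ∈ a
      · rw [siAct_fix i hsa (iff_of_true hia hi1)]
        exact ⟨hch, hf2⟩
      · -- case C : i+1 ∈ a, i ∉ a ; replace i+1 by i
        set g : ℕ → ℕ := fun x => if x = i + 1 then i else x with hgdef
        have hgle : ∀ x, g x ≤ x := fun x => by
          simp only [hgdef]; split <;> omega
        have hgsorted : (a.map g).Pairwise (· < ·) := mapg_sorted i hsa hia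
        have hmap : siAct i a = a.map g := by
          apply siAct_map
          · intro x hx
            rcases eq_or_ne x (i + 1) with rfl | h2
            · rw [Equiv.swap_apply_right]; simp [hgdef]
            · rw [Equiv.swap_apply_of_ne_of_ne (fun hc => hia (by rw [← hc]; exact hx)) h2]
              simp [hgdef, h2]
          · exact hgsorted.imp le_of_lt
        rw [hmap]
        refine ⟨List.isChain_iff_pairwise.mpr hgsorted, ?_⟩
        rw [List.forall₂_iff_get]
        constructor
        · simpa using hlen'
        · intro k hk1 hk2
          simp only [List.get_eq_getElem, List.getElem_map]
          have hk1' : k < a.length := by simpa using hk1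
          exact le_trans (hgle _) (hbd k hk1')
    · by_cases hia : i ∈ a
      · -- case D with a[j] ≠ i (from hcon)
        have haj : a[j]'hja ≠ i := fun hc => hcon ⟨hc, hi1⟩
        obtain ⟨k, hk, hak⟩ := List.mem_iff_getElem.mp hia
        have hWk : i + 1 ≤ W[k]'(hlen' ▸ hk) := by
          have h4 : i ≤ W[k]'(hlen' ▸ hk) := hak ▸ hbd k hk
          rcases eq_or_ne (W[k]'(hlen' ▸ hk)) i with hc | hc
          · exfalso
            have hkj : k = j := by
              by_contra hne
              rcases lt_or_gt_of_ne hne with hl' | hl'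
              · have := hWmono k j (hlen' ▸ hk) hjlt hl'; omega
              · have := hWmono j k hjlt (hlen' ▸ hk) hl'; omega
            subst hkj
            exact haj hak
          · omega
        rw [hDmap hia hi1]
        refine ⟨List.isChain_iff_pairwise.mpr (mapf_sorted i hsa hi1), ?_⟩
        rw [List.forall₂_iff_get]
        constructor
        · simpa using hlen'
        · intro m hm1 hm2
          simp only [List.get_eq_getElem, List.getElem_map]
          have hm1' : m < a.length := by simpa using hm1
          rcases eq_or_ne (a[m]'hm1') i with hmi | hmi
          · have hmk : m = k := by
              by_contra hne
              rcases lt_or_gt_of_ne hne with hl' | hl'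
              · have := hamono m k hm1' hk hl'; omega
              · have := hamono k m hk hm1' hl'; omega
            subst hmk
            rw [hmi, hfi]
            exact hWk
          · rw [hfx _ hmi]
            exact hbd m hm1'
      · rw [siAct_fix i hsa (iff_of_false hia hi1)]
        exact ⟨hch, hf2⟩
  · -- a[j] = i ∧ i+1 ∉ a → siAct i a ∉ A
    rintro ⟨haj, hi1a⟩ hmem
    have hia : i ∈ a := by rw [← haj]; exact List.getElem_mem hja
    rw [hDmap hia hi1a] at hmem
    obtain ⟨-, hf2'⟩ := hmem
    rw [List.forall₂_iff_get] at hf2'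
    have := hf2'.2 j (by simpa using hja) hjlt
    simp only [List.get_eq_getElem, List.getElem_map] at this
    rw [haj, hfi, hWj] at this
    omega
end

section
/- Fix a permutation w ∈ S_n, a multiset η = η₁ + 2η₂, and an index l, and let A_l^η(w) := {α ∈ A_l(w) : η₂ ⊆ α ⊆ η₁ ∪ η₂}. If A_l^η(w) is nonempty, then it contains a unique maximum element with respect to the entrywise order, i.e., an element greater than or equal to every other element of the set. -/
/-- `A_l^η(w) = {α ∈ A_l(w) : η₂ ⊆ α ⊆ η₁ ∪ η₂}` where `η = η₁ + 2η₂`. -/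
def Aeta {n : ℕ} (w : Equiv.Perm (Fin n)) (l : ℕ) (η₁ η₂ : Finset ℕ) : Set (List ℕ) :=
  {a | a ∈ A w l ∧ η₂ ⊆ a.toFinset ∧ a.toFinset ⊆ η₁ ∪ η₂}

private lemma forall2_sum_le : ∀ {a b : List ℕ}, List.Forall₂ (· ≤ ·) a b → a.sum ≤ b.sum
  | _, _, List.Forall₂.nil => le_refl _
  | _, _, List.Forall₂.cons h hs => by
      simpa using Nat.add_le_add h (forall2_sum_le hs)

private lemma forall2_eq_of_sum : ∀ {a b : List ℕ},
    List.Forall₂ (· ≤ ·) a b → a.sum = b.sum → a = b := by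
  intro a b h
  induction h with
  | nil => intro _; rfl
  | @cons x y l l' hxy htail ih =>
      intro hs
      simp only [List.sum_cons] at hs
      have h2 := forall2_sum_le htail
      have hx : x = y := by omega
      have hl : l.sum = l'.sum := by omega
      rw [hx, ih hl]

private lemma chain'_le {a : List ℕ} (h : a.Chain' (· < ·)) {i j : ℕ} (hij : i ≤ j)
    (hj : j < a.length) : a[i]'(lt_of_le_of_lt hij hj) ≤ a[j] := by
  rcases hij.lt_or_eq with h' | rfl
  · have := List.pairwise_iff_get.mp (List.isChain_iff_pairwise.mp h)
      ⟨i, lt_of_le_of_lt hij hj⟩ ⟨j, hj⟩ h'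
    simpa [List.get_eq_getElem] using this.le
  · rfl

/-- A nonempty `A_l^η(w)` contains a unique maximum element. -/
theorem stmt12 (n : ℕ) (w : Equiv.Perm (Fin n)) (l : ℕ) (η₁ η₂ : Finset ℕ)
    (hd : Disjoint η₁ η₂) (hne : (Aeta w l η₁ η₂).Nonempty) :
    ∃! m, m ∈ Aeta w l η₁ η₂ ∧ ∀ a ∈ Aeta w l η₁ η₂, List.Forall₂ (· ≤ ·) a m := by
  classical
  set W := wSorted w l with hW
  set L := W.length with hLdef
  have hlen : ∀ a ∈ Aeta w l η₁ η₂, a.length = L := fun a ha => ha.1.2.length_eq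
  -- choose an element of maximal sum
  set S : Set ℕ := (fun a : List ℕ => a.sum) '' (Aeta w l η₁ η₂) with hSdef
  have hSne : S.Nonempty := hne.image _
  have hSbdd : BddAbove S := by
    refine ⟨W.sum, ?_⟩
    rintro s ⟨a, ha, rfl⟩
    exact forall2_sum_le ha.1.2
  obtain ⟨m, hm, hmsum⟩ : ∃ m ∈ Aeta w l η₁ η₂, m.sum = sSup S := Nat.sSup_mem hSne hSbdd
  have hmL : m.length = L := hlen m hm
  have hmax : ∀ a ∈ Aeta w l η₁ η₂, List.Forall₂ (· ≤ ·) a m := by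
    intro a ha
    have haL : a.length = L := hlen a ha
    set z : List ℕ := List.zipWith max a m with hz
    have hzL : z.length = L := by simp [hz, haL, hmL]
    have hzget : ∀ i (h : i < L), z[i]'(hzL ▸ h) =
        max (a[i]'(haL ▸ h)) (m[i]'(hmL ▸ h)) := by
      intro i h
      simp [hz, List.getElem_zipWith]
    -- c ∈ Aeta
    have hzmem : z ∈ Aeta w l η₁ η₂ := by
      refine ⟨⟨?_, ?_⟩, ?_, ?_⟩
      · -- strictly increasing
        refine List.isChain_iff_getElem.mpr ?_
        intro i hi
        have hi1 : i + 1 < L := by omega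
        have hi0 : i < L := by omega
        have ha' := List.isChain_iff_getElem.mp ha.1.1 i (by omega)
        have hm' := List.isChain_iff_getElem.mp hm.1.1 i (by omega)
        rw [hzget i hi0, hzget (i+1) hi1]
        exact max_lt_max ha' hm'
      · -- bounded by W
        rw [List.forall₂_iff_get]
        refine ⟨by rw [hzL], ?_⟩
        intro i h₁ h₂
        have hiL : i < L := hzL ▸ h₁
        have ha' := ha.1.2.get (show i < a.length by omega) h₂
        have hm' := hm.1.2.get (show i < m.length by omega) h₂
        simp only [List.get_eq_getElem] at ha' hm' ⊢
        rw [hzget i hiL]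
        exact max_le ha' hm'
      · -- η₂ ⊆ c
        intro x hx
        have hxa : x ∈ a := List.mem_toFinset.mp (ha.2.1 hx)
        have hxm : x ∈ m := List.mem_toFinset.mp (hm.2.1 hx)
        obtain ⟨i, hi, hia⟩ := List.mem_iff_getElem.mp hxa
        obtain ⟨j, hj, hjm⟩ := List.mem_iff_getElem.mp hxm
        rw [haL] at hi; rw [hmL] at hj
        rw [List.mem_toFinset, List.mem_iff_getElem]
        rcases le_total i j with hij | hij
        · have haj : x ≤ a[j]'(haL ▸ hj) := by
            calc x = a[i]'(haL ▸ hi) := hia.symm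
            _ ≤ a[j]'(haL ▸ hj) := chain'_le ha.1.1 hij (haL ▸ hj)
          rcases eq_or_lt_of_le haj with heq | hlt
          · exact ⟨j, hzL ▸ hj, by rw [hzget j hj, ← heq, hjm]; simp⟩
          · have hmi : m[i]'(hmL ▸ hi) ≤ x := by
              calc m[i]'(hmL ▸ hi) ≤ m[j]'(hmL ▸ hj) := chain'_le hm.1.1 hij (hmL ▸ hj)
              _ = x := hjm
            exact ⟨i, hzL ▸ hi, by rw [hzget i hi, hia]; exact max_eq_left hmi⟩
        · have hmi : x ≤ m[i]'(hmL ▸ hi) := by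
            calc x = m[j]'(hmL ▸ hj) := hjm.symm
            _ ≤ m[i]'(hmL ▸ hi) := chain'_le hm.1.1 hij (hmL ▸ hi)
          rcases eq_or_lt_of_le hmi with heq | hlt
          · exact ⟨i, hzL ▸ hi, by rw [hzget i hi, ← heq, hia]; simp⟩
          · have haj : a[j]'(haL ▸ hj) ≤ x := by
              calc a[j]'(haL ▸ hj) ≤ a[i]'(haL ▸ hi) := chain'_le ha.1.1 hij (haL ▸ hi)
              _ = x := hia
            exact ⟨j, hzL ▸ hj, by rw [hzget j hj, hjm]; exact max_eq_right haj⟩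
      · -- c ⊆ η₁ ∪ η₂
        intro x hx
        obtain ⟨i, hi, hic⟩ := List.mem_iff_getElem.mp (List.mem_toFinset.mp hx)
        have hiL : i < L := hzL ▸ hi
        rw [hzget i hiL] at hic
        rcases max_choice (a[i]'(haL ▸ hiL)) (m[i]'(hmL ▸ hiL)) with hm' | hm'
        · refine ha.2.2 (List.mem_toFinset.mpr ?_)
          rw [← hic, hm']
          exact List.getElem_mem _
        · refine hm.2.2 (List.mem_toFinset.mpr ?_)
          rw [← hic, hm']
          exact List.getElem_mem _
    -- sum of c ≤ sum of m, but m ≤ c pointwise, hence m = z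
    have hmc : List.Forall₂ (· ≤ ·) m z := by
      rw [List.forall₂_iff_get]
      refine ⟨by rw [hmL, hzL], ?_⟩
      intro i h₁ h₂
      have hiL : i < L := hmL ▸ h₁
      simp only [List.get_eq_getElem]
      rw [hzget i hiL]
      exact le_max_right _ _
    have hzsum : z.sum ≤ m.sum := by
      rw [hmsum]
      exact le_csSup hSbdd ⟨z, hzmem, rfl⟩
    have : m = z := forall2_eq_of_sum hmc (le_antisymm (forall2_sum_le hmc) hzsum)
    -- conclude a ≤ m
    rw [List.forall₂_iff_get]
    refine ⟨by rw [haL, hmL], ?_⟩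
    intro i h₁ h₂
    have hiL : i < L := haL ▸ h₁
    simp only [List.get_eq_getElem]
    have hmz := List.getElem_of_eq this h₂
    rw [hmz, hzget i hiL]
    exact le_max_left _ _
  refine ⟨m, ⟨hm, hmax⟩, ?_⟩
  rintro m' ⟨hm', hmax'⟩
  exact forall2_eq_of_sum (hmax m' hm') (le_antisymm (forall2_sum_le (hmax m' hm'))
    (forall2_sum_le (hmax' m hm)))
end

section
/- Let k ≤ l, w ∈ S_n, and let η be a multiset with |η₁| + 2|η₂| = k + l. Let α_max ∈ A_l^η(w) and β_max ∈ A_k^η(w) be the unique maximal elements of these sets (assumed nonempty), and let β_min be the set complement of α_max in η. Then β_max ⊆ α_max and β_min ∩ β_max = η₂. -/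
namespace Stmt13Aux
open List

/-- elements strictly below `v` -/
def pb (v : ℕ) : ℕ → Bool := fun x => decide (x < v)
/-- elements in `[u, v)` -/
def mid (u v : ℕ) : ℕ → Bool := fun x => decide (u ≤ x ∧ x < v)

lemma lt_countP_of_get_lt {W : List ℕ} (hW : W.Pairwise (· < ·)) {t : ℕ} (ht : t < W.length)
    {v : ℕ} (h : W[t] < v) : t < W.countP (pb v) := by
  have hdecomp : W.countP (pb v) =
      (W.take (t+1)).countP (pb v) + (W.drop (t+1)).countP (pb v) := by
    rw [← countP_append, take_append_drop]
  have hlen : (W.take (t+1)).length = t + 1 := by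
    rw [length_take]; omega
  have h1 : (W.take (t+1)).countP (pb v) = t + 1 := by
    rw [countP_eq_length.mpr, hlen]
    intro x hx
    obtain ⟨m, hm, rfl⟩ := mem_iff_getElem.mp hx
    rw [getElem_take]
    have hmt : m ≤ t := by rw [hlen] at hm; omega
    have : (W.take (t+1))[m] = W[m] := getElem_take
    have hle : W[m] ≤ W[t] := by
      rcases Nat.lt_or_ge m t with h' | h'
      · exact le_of_lt ((pairwise_iff_getElem.mp hW) m t (by omega) ht h')
      · have : m = t := by omega
        subst this; rfl
    simp only [pb, decide_eq_true_eq]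
    omega
  omega

lemma countP_le_of_le_get {W : List ℕ} (hW : W.Pairwise (· < ·)) {t : ℕ} (ht : t < W.length)
    {v : ℕ} (h : v ≤ W[t]) : W.countP (pb v) ≤ t := by
  have hdecomp : W.countP (pb v) =
      (W.take t).countP (pb v) + (W.drop t).countP (pb v) := by
    rw [← countP_append, take_append_drop]
  have h2 : (W.drop t).countP (pb v) = 0 := by
    rw [countP_eq_zero]
    intro x hx
    obtain ⟨m, hm, rfl⟩ := mem_iff_getElem.mp hx
    rw [getElem_drop]
    have htm : t + m < W.length := by rw [length_drop] at hm; omega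
    have hle : W[t] ≤ W[t+m] := by
      rcases Nat.eq_or_lt_of_le (Nat.le_add_right t m) with h' | h'
      · exact le_of_eq (by congr 1)
      · exact le_of_lt ((pairwise_iff_getElem.mp hW) t (t+m) ht htm h')
    simp only [pb, decide_eq_true_eq]
    omega
  have h1 : (W.take t).countP (pb v) ≤ t := by
    calc (W.take t).countP (pb v) ≤ (W.take t).length := countP_le_length
    _ ≤ t := by rw [length_take]; omega
  omega

lemma get_lt_iff {W : List ℕ} (hW : W.Pairwise (· < ·)) {t : ℕ} (ht : t < W.length)
    {v : ℕ} : W[t] < v ↔ t < W.countP (pb v) := by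
  constructor
  · exact lt_countP_of_get_lt hW ht
  · intro h
    by_contra hc
    have := countP_le_of_le_get hW ht (Nat.le_of_not_lt hc)
    omega

lemma le_get_iff {W : List ℕ} (hW : W.Pairwise (· < ·)) {t : ℕ} (ht : t < W.length)
    {v : ℕ} : v ≤ W[t] ↔ W.countP (pb v) ≤ t := by
  constructor
  · exact countP_le_of_le_get hW ht
  · intro h
    by_contra hc
    have := lt_countP_of_get_lt hW ht (Nat.lt_of_not_le hc)
    omega

lemma countP_get {W : List ℕ} (hW : W.Pairwise (· < ·)) {t : ℕ} (ht : t < W.length) :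
    W.countP (pb W[t]) = t := by
  have h1 : W.countP (pb W[t]) ≤ t := countP_le_of_le_get hW ht le_rfl
  rcases Nat.eq_or_lt_of_le h1 with h | h
  · exact h
  · exfalso
    have hcl : W.countP (pb W[t]) < W.length := by omega
    have : W[W.countP (pb W[t])] < W[t] :=
      (pairwise_iff_getElem.mp hW) _ t hcl ht h
    have := lt_countP_of_get_lt hW hcl this
    omega

lemma mem_index {W : List ℕ} (hW : W.Pairwise (· < ·)) {v : ℕ} (hv : v ∈ W) :
    ∃ h : W.countP (pb v) < W.length, W[W.countP (pb v)] = v := by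
  obtain ⟨q, hq, rfl⟩ := mem_iff_getElem.mp hv
  rw [countP_get hW hq]
  exact ⟨hq, rfl⟩

lemma countP_split (l : List ℕ) {u v : ℕ} (huv : u ≤ v) :
    l.countP (pb v) = l.countP (pb u) + l.countP (mid u v) := by
  induction l with
  | nil => simp
  | cons x xs ih =>
    simp only [countP_cons, ih]
    simp only [pb, mid, decide_eq_true_eq]
    by_cases h0 : u ≤ x <;> by_cases h1 : x < u <;> by_cases h2 : x < v <;>
      simp [h0, h1, h2] <;> omega

lemma countP_toFinset {l : List ℕ} (h : l.Nodup) (q : ℕ → Bool) :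
    l.countP q = (l.toFinset.filter (fun x => q x = true)).card := by
  rw [countP_eq_length_filter, ← toFinset_filter,
    toFinset_card_of_nodup (h.filter q)]

lemma countP_le_of_subset {l₁ l₂ : List ℕ} (h₁ : l₁.Nodup) (h₂ : l₂.Nodup) (q : ℕ → Bool)
    (hsub : ∀ x ∈ l₁, q x = true → x ∈ l₂) : l₁.countP q ≤ l₂.countP q := by
  rw [countP_toFinset h₁, countP_toFinset h₂]
  apply Finset.card_le_card
  intro x hx
  simp only [Finset.mem_filter, mem_toFinset] at *
  exact ⟨hsub x hx.1 hx.2, hx.2⟩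

lemma countP_three (l : List ℕ) (b : ℕ) :
    l.length = l.countP (pb b) + l.countP (fun x => decide (x = b))
      + l.countP (fun x => decide (b < x)) := by
  induction l with
  | nil => simp
  | cons x xs ih =>
    simp only [countP_cons, length_cons]
    simp only [pb, decide_eq_true_eq]
    by_cases h1 : x < b <;> by_cases h2 : x = b <;> by_cases h3 : b < x <;>
      simp [h1, h2, h3] <;> omega

lemma countP_eq_one_of_mem {l : List ℕ} (h : l.Nodup) {b : ℕ} (hb : b ∈ l) :
    l.countP (fun x => decide (x = b)) = 1 := by
  have := List.count_eq_one_of_mem h hb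
  rw [List.count] at this
  rw [← this]
  apply countP_congr
  intro x _
  simp [beq_iff_eq]

end Stmt13Aux

open List Stmt13Aux

set_option maxHeartbeats 2000000 in
/-- `β_max ⊆ α_max` and `β_min ∩ β_max = η₂`. -/
theorem stmt13 (n : ℕ) (w : Equiv.Perm (Fin n)) (k l : ℕ) (hkl : k ≤ l)
    (η₁ η₂ : Finset ℕ) (hd : Disjoint η₁ η₂)
    (hc : η₁.card + 2 * η₂.card = k + l)
    (amax : List ℕ) (ham : amax ∈ Aeta w l η₁ η₂)
    (hamax : ∀ a ∈ Aeta w l η₁ η₂, List.Forall₂ (· ≤ ·) a amax)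
    (bmax : List ℕ) (hbm : bmax ∈ Aeta w k η₁ η₂)
    (hbmax : ∀ b ∈ Aeta w k η₁ η₂, List.Forall₂ (· ≤ ·) b bmax)
    (bmin : Finset ℕ)
    (hbmin : (↑amax : Multiset ℕ) + bmin.val = η₁.val + 2 • η₂.val) :
    bmax.toFinset ⊆ amax.toFinset ∧ bmin ∩ bmax.toFinset = η₂ := by
  classical
  obtain ⟨⟨hcA, hfA⟩, hE2A, hAE⟩ := ham
  obtain ⟨⟨hcB, hfB⟩, hE2B, hBE⟩ := hbm
  have hsA : amax.Pairwise (· < ·) := List.isChain_iff_pairwise.mp hcA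
  have hsB : bmax.Pairwise (· < ·) := List.isChain_iff_pairwise.mp hcB
  have hndA : amax.Nodup := hsA.nodup
  have hndB : bmax.Nodup := hsB.nodup
  have hsub : bmax.toFinset ⊆ amax.toFinset := by
    by_contra hns
    have hSne : (bmax.toFinset \ amax.toFinset).Nonempty := Finset.sdiff_nonempty.mpr hns
    set S := bmax.toFinset \ amax.toFinset with hS
    set b := S.max' hSne with hbdef
    have hbS : b ∈ S := S.max'_mem hSne
    have hbB : b ∈ bmax := List.mem_toFinset.mp (Finset.mem_sdiff.mp hbS).1
    have hbA : b ∉ amax := fun h => (Finset.mem_sdiff.mp hbS).2 (List.mem_toFinset.mpr h)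
    have hup : ∀ x ∈ bmax, b < x → x ∈ amax := by
      intro x hx hbx
      by_contra hxa
      have hxS : x ∈ S := Finset.mem_sdiff.mpr
        ⟨List.mem_toFinset.mpr hx, fun h => hxa (List.mem_toFinset.mp h)⟩
      have := Finset.le_max' S x hxS
      omega
    have hbη : b ∈ η₁ := by
      rcases Finset.mem_union.mp (hBE (List.mem_toFinset.mpr hbB)) with h | h
      · exact h
      · exact absurd (List.mem_toFinset.mp (hE2A h)) hbA
    have hbη2 : b ∉ η₂ := fun h => (Finset.disjoint_left.mp hd hbη) h
    set Wl := wSorted w l with hWldef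
    set Wk := wSorted w k with hWkdef
    have hsWl : Wl.Pairwise (· < ·) := (Finset.sortedLT_sort _).pairwise
    have hsWk : Wk.Pairwise (· < ·) := (Finset.sortedLT_sort _).pairwise
    have hndWl : Wl.Nodup := hsWl.nodup
    have hndWk : Wk.Nodup := hsWk.nodup
    have hWlf : Wl.toFinset = firstVals w l := Finset.sort_toFinset _ _
    have hWkf : Wk.toFinset = firstVals w k := Finset.sort_toFinset _ _
    have hlenA : amax.length = Wl.length := hfA.length_eq
    have hlenB : bmax.length = Wk.length := hfB.length_eq
    have hgA : ∀ t (h : t < amax.length), amax[t] ≤ Wl[t]'(by omega) := by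
      intro t h
      have := (List.forall₂_iff_get.mp hfA).2 t h (by omega)
      simpa using this
    have hgB : ∀ t (h : t < bmax.length), bmax[t] ≤ Wk[t]'(by omega) := by
      intro t h
      have := (List.forall₂_iff_get.mp hfB).2 t h (by omega)
      simpa using this
    have hFsub : firstVals w k ⊆ firstVals w l := by
      intro x hx
      simp only [firstVals, Finset.mem_image, Finset.mem_filter] at *
      obtain ⟨jj, ⟨hju, hjk⟩, rfl⟩ := hx
      exact ⟨jj, ⟨hju, by omega⟩, rfl⟩
    have hKL : Wk.length ≤ Wl.length := by
      rw [hWldef, hWkdef, wSorted, wSorted, Finset.length_sort, Finset.length_sort]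
      exact Finset.card_le_card hFsub
    set X := firstVals w l \ firstVals w k with hXdef
    have hdecomp : ∀ v : ℕ, Wl.countP (pb v)
        = Wk.countP (pb v) + (X.filter (fun x => pb v x = true)).card := by
      intro v
      rw [countP_toFinset hndWl, countP_toFinset hndWk, hWlf, hWkf]
      have hsplit : firstVals w l = firstVals w k ∪ X :=
        (Finset.union_sdiff_of_subset hFsub).symm
      rw [hsplit, Finset.filter_union, Finset.card_union_of_disjoint
        (Finset.disjoint_filter_filter Finset.disjoint_sdiff)]
    have hXcard : X.card + (firstVals w k).card = (firstVals w l).card :=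
      Finset.card_sdiff_add_card_eq_card hFsub
    have hWlcard : Wl.length = (firstVals w l).card := by
      rw [hWldef, wSorted, Finset.length_sort]
    have hWkcard : Wk.length = (firstVals w k).card := by
      rw [hWkdef, wSorted, Finset.length_sort]
    obtain ⟨hjlt, hbj⟩ := mem_index hsB hbB
    set jB := bmax.countP (pb b) with hjdef
    set iA := amax.countP (pb b) with hidef
    have hiAle : iA ≤ amax.length := countP_le_length
    have hbwk : b ≤ Wk[jB]'(by omega) := by
      have := hgB jB hjlt
      rwa [hbj] at this
    have hWkb : Wk.countP (pb b) ≤ jB := countP_le_of_le_get hsWk (by omega) hbwk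
    set cX := (X.filter (fun x => pb b x = true)).card with hcXdef
    have hcXle : cX ≤ X.card := Finset.card_filter_le _ _
    have hWlb : Wl.countP (pb b) ≤ jB + cX := by rw [hdecomp]; omega
    rcases le_or_gt iA (jB + cX) with hcase | hcase
    · -- Case I : exchange in bmax
      -- Step 1: find a = least element of amax \ bmax above b
      have hTne : ((amax.toFinset \ bmax.toFinset).filter (fun x => b < x)).Nonempty := by
        by_contra hTe
        rw [Finset.not_nonempty_iff_eq_empty] at hTe
        have hupA : ∀ x ∈ amax, b < x → x ∈ bmax := by
          intro x hx hbx
          by_contra hxb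
          have hxT : x ∈ (amax.toFinset \ bmax.toFinset).filter (fun x => b < x) :=
            Finset.mem_filter.mpr ⟨Finset.mem_sdiff.mpr
              ⟨List.mem_toFinset.mpr hx, fun h => hxb (List.mem_toFinset.mp h)⟩, hbx⟩
          rw [hTe] at hxT
          exact absurd hxT (Finset.notMem_empty x)
        have h3A := countP_three amax b
        have h3B := countP_three bmax b
        have hzA : amax.countP (fun x => decide (x = b)) = 0 := by
          rw [countP_eq_zero]
          intro x hx hxb
          simp only [decide_eq_true_eq] at hxb
          exact hbA (hxb ▸ hx)
        have h1B : bmax.countP (fun x => decide (x = b)) = 1 := countP_eq_one_of_mem hndB hbB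
        have hAB : amax.countP (fun x => decide (b < x)) ≤ bmax.countP (fun x => decide (b < x)) :=
          countP_le_of_subset hndA hndB _
            (fun x hx hq => hupA x hx (by simpa using hq))
        omega
      set T := (amax.toFinset \ bmax.toFinset).filter (fun x => b < x) with hTdef
      have haT := T.min'_mem hTne
      set a := T.min' hTne with hadef
      have haA : a ∈ amax := by
        have := (Finset.mem_sdiff.mp (Finset.mem_filter.mp haT).1).1
        exact List.mem_toFinset.mp this
      have haB : a ∉ bmax := by
        have := (Finset.mem_sdiff.mp (Finset.mem_filter.mp haT).1).2
        exact fun h => this (List.mem_toFinset.mpr h)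
      have hba : b < a := (Finset.mem_filter.mp haT).2
      have hamin : ∀ x ∈ amax, x ∉ bmax → b < x → a ≤ x := by
        intro x hx h1 h2
        exact T.min'_le x (Finset.mem_filter.mpr ⟨Finset.mem_sdiff.mpr
          ⟨List.mem_toFinset.mpr hx, fun h => h1 (List.mem_toFinset.mp h)⟩, h2⟩)
      set qB := bmax.countP (pb a) with hqdef
      have hqK : qB ≤ bmax.length := countP_le_length
      have hjq : jB < qB := by
        have hsp := countP_split bmax (le_of_lt hba)
        have hpos : 0 < bmax.countP (mid b a) :=
          countP_pos_iff.mpr ⟨b, hbB, by simp [mid]; omega⟩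
        rw [hjdef, hqdef]
        omega
      -- key bound lemma
      have hkey : ∀ v t (ht : t < Wk.length), v ∈ amax → b < v → v ≤ a →
          bmax.countP (pb v) = t + 1 → v ≤ Wk[t] := by
        intro v t ht hvA hbv hva hcnt
        obtain ⟨huA, hvu⟩ := mem_index hsA hvA
        have hWlv : Wl.countP (pb v) ≤ amax.countP (pb v) := by
          apply countP_le_of_le_get hsWl (show amax.countP (pb v) < Wl.length by omega)
          have := hgA _ huA
          rwa [hvu] at this
        have hsplA := countP_split amax (show b + 1 ≤ v by omega)
        have hsplB := countP_split bmax (show b + 1 ≤ v by omega)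
        have hA1 : amax.countP (pb (b+1)) = iA := by
          have hsp := countP_split amax (show b ≤ b + 1 by omega)
          have hz : amax.countP (mid b (b+1)) = 0 := by
            rw [countP_eq_zero]
            intro x hx hq
            simp only [mid, decide_eq_true_eq] at hq
            have : x = b := by omega
            exact hbA (this ▸ hx)
          rw [hidef]; omega
        have hB1 : bmax.countP (pb (b+1)) = jB + 1 := by
          have hsp := countP_split bmax (show b ≤ b + 1 by omega)
          have ho : bmax.countP (mid b (b+1)) = 1 := by
            rw [show bmax.countP (mid b (b+1))
                = bmax.countP (fun x => decide (x = b)) from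
              countP_congr (by intro x _; simp [mid]; omega)]
            exact countP_eq_one_of_mem hndB hbB
          rw [hjdef]; omega
        have hmidle : amax.countP (mid (b+1) v) ≤ bmax.countP (mid (b+1) v) := by
          apply countP_le_of_subset hndA hndB
          intro x hx hq
          simp only [mid, decide_eq_true_eq] at hq
          by_contra hxB
          have := hamin x hx hxB (by omega)
          omega
        have hdc := hdecomp v
        have hcXmono : cX ≤ (X.filter (fun x => pb v x = true)).card := by
          apply Finset.card_le_card
          intro x hx
          simp only [Finset.mem_filter, pb, decide_eq_true_eq] at *
          exact ⟨hx.1, by omega⟩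
        have hfinal : Wk.countP (pb v) ≤ t := by omega
        exact (le_get_iff hsWk ht).mpr hfinal
      -- build the improved list
      have hK' : jB < bmax.length := hjlt
      set F : Fin bmax.length → ℕ := fun t =>
        if t.val < jB then bmax.getD t.val 0
        else if t.val + 1 < qB then bmax.getD (t.val + 1) 0
        else if t.val + 1 = qB then a
        else bmax.getD t.val 0 with hFdef
      have hF1 : ∀ (t : Fin bmax.length) (h : t.val < jB), F t = bmax[t.val] := by
        intro t h
        simp only [hFdef, if_pos h]
        exact List.getD_eq_getElem _ _ t.isLt
      have hF2 : ∀ (t : Fin bmax.length) (h1 : jB ≤ t.val) (h2 : t.val + 1 < qB),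
          F t = bmax[t.val + 1]'(lt_of_lt_of_le h2 hqK) := by
        intro t h1 h2
        simp only [hFdef, if_neg (Nat.not_lt.mpr h1), if_pos h2]
        exact List.getD_eq_getElem _ _ (lt_of_lt_of_le h2 hqK)
      have hF3 : ∀ (t : Fin bmax.length) (h1 : jB ≤ t.val) (h2 : t.val + 1 = qB), F t = a := by
        intro t h1 h2
        simp only [hFdef, if_neg (Nat.not_lt.mpr h1),
          if_neg (show ¬ t.val + 1 < qB by omega), if_pos h2]
      have hF4 : ∀ (t : Fin bmax.length) (h1 : qB ≤ t.val), F t = bmax[t.val] := by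
        intro t h1
        have hx1 : ¬ t.val < jB := by omega
        have hx2 : ¬ t.val + 1 < qB := by omega
        have hx3 : ¬ t.val + 1 = qB := by omega
        simp only [hFdef, if_neg hx1, if_neg hx2, if_neg hx3]
        exact List.getD_eq_getElem _ _ t.isLt
      set β' := List.ofFn F with hβ'def
      have hβ'len : β'.length = bmax.length := List.length_ofFn
      have hβ'get : ∀ (t : ℕ) (h : t < bmax.length), β'[t]'(by omega) = F ⟨t, h⟩ := by
        intro t h
        rw [List.getElem_ofFn]
      have hmono : ∀ (s t : ℕ) (hs : s < bmax.length) (ht : t < bmax.length), s < t →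
          bmax[s] < bmax[t] :=
        fun s t hs ht hst => (pairwise_iff_getElem.mp hsB) s t hs ht hst
      have hBlt_b : ∀ (t : ℕ) (ht : t < bmax.length), bmax[t] < b ↔ t < jB :=
        fun t ht => get_lt_iff hsB ht
      have hBlt_a : ∀ (t : ℕ) (ht : t < bmax.length), bmax[t] < a ↔ t < qB :=
        fun t ht => get_lt_iff hsB ht
      have hBgt_a : ∀ (t : ℕ) (ht : t < bmax.length), qB ≤ t → a < bmax[t] := by
        intro t ht h
        have h1 : a ≤ bmax[t] := (le_get_iff hsB ht).mpr h
        have h2 : bmax[t] ≠ a := fun e => haB (e ▸ List.getElem_mem ht)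
        omega
      have hchain : β'.Chain' (· < ·) := by
        refine List.isChain_iff_getElem.mpr ?_
        intro t ht
        rw [hβ'len] at ht
        have ht1 : t + 1 < bmax.length := by omega
        have ht0 : t < bmax.length := by omega
        rw [hβ'get t ht0, hβ'get (t+1) ht1]
        rcases lt_or_ge (t+1) jB with c1 | c1
        · rw [hF1 ⟨t, ht0⟩ (show t < jB by omega), hF1 ⟨t+1, ht1⟩ (show t+1 < jB by omega)]
          exact hmono t (t+1) ht0 ht1 (Nat.lt_succ_self t)
        · rcases lt_or_ge t jB with c2 | c2
          · -- t+1 = jB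
            rw [hF1 ⟨t, ht0⟩ (show t < jB by omega)]
            rcases lt_or_ge (t+2) qB with c3 | c3
            · rw [hF2 ⟨t+1, ht1⟩ (show jB ≤ t+1 by omega) (show t+1+1 < qB by omega)]
              exact hmono t (t+1+1) ht0 (lt_of_lt_of_le (show t+1+1 < qB by omega) hqK) (by omega)
            · rcases eq_or_lt_of_le c3 with c4 | c4
              · rw [hF3 ⟨t+1, ht1⟩ (show jB ≤ t+1 by omega) (show t+1+1 = qB by omega)]
                exact (hBlt_a t ht0).mpr (by omega)
              · rw [hF4 ⟨t+1, ht1⟩ (show qB ≤ t+1 by omega)]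
                exact hmono t (t+1) ht0 ht1 (Nat.lt_succ_self t)
          · -- jB ≤ t
            rcases lt_or_ge (t+1) qB with c3 | c3
            · rw [hF2 ⟨t, ht0⟩ (show jB ≤ t by omega) (show t+1 < qB by omega)]
              rcases lt_or_ge (t+2) qB with c4 | c4
              · rw [hF2 ⟨t+1, ht1⟩ (show jB ≤ t+1 by omega) (show t+1+1 < qB by omega)]
                exact hmono (t+1) (t+1+1) ht1 (lt_of_lt_of_le (show t+1+1 < qB by omega) hqK)
                  (Nat.lt_succ_self _)
              · rcases eq_or_lt_of_le c4 with c5 | c5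
                · rw [hF3 ⟨t+1, ht1⟩ (show jB ≤ t+1 by omega) (show t+1+1 = qB by omega)]
                  exact (hBlt_a (t+1) ht1).mpr (by omega)
                · exact absurd c5 (by omega)
            · rcases eq_or_lt_of_le c3 with c4 | c4
              · rw [hF3 ⟨t, ht0⟩ (show jB ≤ t by omega) (show t+1 = qB by omega),
                  hF4 ⟨t+1, ht1⟩ (show qB ≤ t+1 by omega)]
                exact hBgt_a (t+1) ht1 (show qB ≤ t+1 by omega)
              · rw [hF4 ⟨t, ht0⟩ (show qB ≤ t by omega),
                  hF4 ⟨t+1, ht1⟩ (show qB ≤ t+1 by omega)]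
                exact hmono t (t+1) ht0 ht1 (Nat.lt_succ_self t)
      have hforall : List.Forall₂ (· ≤ ·) β' Wk := by
        rw [List.forall₂_iff_get]
        refine ⟨by rw [hβ'len, hlenB], ?_⟩
        intro t h1 h2
        rw [hβ'len] at h1
        rw [List.get_eq_getElem, List.get_eq_getElem]
        simp only [hβ'len]
        rw [hβ'get t h1]
        rcases lt_or_ge t jB with c1 | c1
        · rw [hF1 ⟨t, h1⟩ (show t < jB by omega)]
          exact hgB t h1
        · rcases lt_or_ge (t+1) qB with c2 | c2
          · rw [hF2 ⟨t, h1⟩ (show jB ≤ t by omega) (show t+1 < qB by omega)]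
            have ht1 : t + 1 < bmax.length := lt_of_lt_of_le c2 hqK
            have hne : bmax[t+1]'ht1 ≠ b := by
              intro e
              have hcg := countP_get hsB ht1
              rw [e] at hcg
              rw [← hjdef] at hcg
              omega
            have hble : b ≤ bmax[t+1]'ht1 := (le_get_iff hsB ht1).mpr (by rw [← hjdef]; omega)
            have hblt : b < bmax[t+1]'ht1 := lt_of_le_of_ne hble (Ne.symm hne)
            apply hkey _ t h2
            · exact hup _ (List.getElem_mem ht1) hblt
            · exact hblt
            · exact le_of_lt ((hBlt_a (t+1) ht1).mpr c2)
            · exact countP_get hsB ht1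
          · rcases eq_or_lt_of_le c2 with c3 | c3
            · rw [hF3 ⟨t, h1⟩ (show jB ≤ t by omega) (show t+1 = qB by omega)]
              apply hkey _ t h2 haA hba le_rfl
              omega
            · rw [hF4 ⟨t, h1⟩ (show qB ≤ t by omega)]
              exact hgB t h1
      have hE2β' : η₂ ⊆ β'.toFinset := by
        intro y hy
        rw [List.mem_toFinset, hβ'def, List.mem_ofFn]
        have hyB : y ∈ bmax := List.mem_toFinset.mp (hE2B hy)
        obtain ⟨m, hm, hym⟩ := List.mem_iff_getElem.mp hyB
        have hynb : y ≠ b := fun e => hbη2 (e ▸ hy)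
        have hmj : m ≠ jB := by
          intro e
          subst e
          exact hynb (by rw [← hym]; exact hbj)
        rcases lt_or_ge m jB with c | c
        · exact ⟨⟨m, hm⟩, by rw [hF1 ⟨m, hm⟩ c]; exact hym⟩
        · have c' : jB < m := by omega
          rcases lt_or_ge m qB with c2 | c2
          · refine ⟨⟨m - 1, by omega⟩, ?_⟩
            rw [hF2 ⟨m-1, by omega⟩ (show jB ≤ m-1 by omega) (show m-1+1 < qB by omega), ← hym]
            congr 1
            show m - 1 + 1 = m
            omega
          · exact ⟨⟨m, hm⟩, by rw [hF4 ⟨m, hm⟩ c2]; exact hym⟩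
      have hBEβ' : β'.toFinset ⊆ η₁ ∪ η₂ := by
        intro x hx
        rw [List.mem_toFinset, hβ'def, List.mem_ofFn] at hx
        obtain ⟨t, ht⟩ := hx
        have hval : F t ∈ bmax ∨ F t = a := by
          rcases lt_or_ge t.val jB with c | c
          · rw [hF1 t c]; exact Or.inl (List.getElem_mem _)
          · rcases lt_or_ge (t.val+1) qB with c2 | c2
            · rw [hF2 t c c2]; exact Or.inl (List.getElem_mem _)
            · rcases eq_or_lt_of_le c2 with c3 | c3
              · rw [hF3 t c c3.symm]; exact Or.inr rfl
              · rw [hF4 t (by omega)]; exact Or.inl (List.getElem_mem _)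
        rcases hval with h | h
        · exact hBE (List.mem_toFinset.mpr (ht ▸ h))
        · exact hAE (List.mem_toFinset.mpr (by rw [← ht, h]; exact haA))
      have hβ'mem : β' ∈ Aeta w k η₁ η₂ :=
        ⟨⟨hchain, hforall⟩, hE2β', hBEβ'⟩
      have hcomp := (List.forall₂_iff_get.mp (hbmax β' hβ'mem)).2 (qB - 1)
        (by rw [hβ'len]; omega) (by omega)
      rw [List.get_eq_getElem, List.get_eq_getElem] at hcomp
      simp only [hβ'len] at hcomp
      rw [hβ'get (qB-1) (by omega),
        hF3 ⟨qB-1, by omega⟩ (show jB ≤ qB-1 by omega) (show qB-1+1 = qB by omega)] at hcomp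
      have := (hBlt_a (qB-1) (by omega)).mpr (by omega)
      omega
    · -- Case II : exchange in amax
      have hiA1 : 1 ≤ iA := by omega
      have hiAm1 : iA - 1 < amax.length := by omega
      have hmonoA : ∀ (s t : ℕ) (hs : s < amax.length) (ht : t < amax.length), s < t →
          amax[s] < amax[t] :=
        fun s t hs ht hst => (pairwise_iff_getElem.mp hsA) s t hs ht hst
      have hAlt_b : ∀ (t : ℕ) (ht : t < amax.length), amax[t] < b ↔ t < iA :=
        fun t ht => get_lt_iff hsA ht
      have hAgt_b : ∀ (t : ℕ) (ht : t < amax.length), iA ≤ t → b < amax[t] := by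
        intro t ht h
        have h1 : b ≤ amax[t] := (le_get_iff hsA ht).mpr (by rw [← hidef]; omega)
        have h2 : amax[t] ≠ b := fun e => hbA (e ▸ List.getElem_mem ht)
        omega
      have hPex : ∃ m, m ≤ iA - 1 ∧ amax.getD m 0 ∉ η₂ := by
        by_contra hno
        push_neg at hno
        have hsubm : amax.countP (pb b) ≤ bmax.countP (pb b) := by
          apply countP_le_of_subset hndA hndB
          intro x hx hq
          simp only [pb, decide_eq_true_eq] at hq
          obtain ⟨hmx, hxv⟩ := mem_index hsA hx
          have hmi : amax.countP (pb x) < iA := by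
            rw [hidef]
            exact lt_countP_of_get_lt hsA hmx (by rw [hxv]; exact hq)
          have hxη2 : x ∈ η₂ := by
            have := hno (amax.countP (pb x)) (by omega)
            rwa [List.getD_eq_getElem _ _ hmx, hxv] at this
          exact List.mem_toFinset.mp (hE2B hxη2)
        rw [← hidef, ← hjdef] at hsubm
        omega
      obtain ⟨m0, hm0le, hm0⟩ := hPex
      set sG := Nat.findGreatest (fun m => amax.getD m 0 ∉ η₂) (iA - 1) with hsGdef
      have hPs : amax.getD sG 0 ∉ η₂ := by
        rw [hsGdef]; exact Nat.findGreatest_spec (P := fun m => amax.getD m 0 ∉ η₂) hm0le hm0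
      have hsle : sG ≤ iA - 1 := by
        rw [hsGdef]; exact Nat.findGreatest_le _
      have hmid : ∀ m, sG < m → m ≤ iA - 1 → amax.getD m 0 ∈ η₂ := by
        intro m h1 h2
        have h3 : Nat.findGreatest (fun m => amax.getD m 0 ∉ η₂) (iA-1) < m := by
          rw [← hsGdef]; exact h1
        exact not_not.mp (Nat.findGreatest_is_greatest h3 h2)
      set G : Fin amax.length → ℕ := fun t =>
        if t.val < sG then amax.getD t.val 0
        else if t.val + 1 ≤ iA - 1 then amax.getD (t.val + 1) 0
        else if t.val = iA - 1 then b
        else amax.getD t.val 0 with hGdef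
      have hG1 : ∀ (t : ℕ) (h0 : t < amax.length) (h : t < sG), G ⟨t, h0⟩ = amax[t] := by
        intro t h0 h
        simp only [hGdef, if_pos h]
        exact List.getD_eq_getElem _ _ h0
      have hG2 : ∀ (t : ℕ) (h0 : t < amax.length) (h1 : sG ≤ t) (h2 : t + 1 ≤ iA - 1),
          G ⟨t, h0⟩ = amax[t + 1]'(lt_of_le_of_lt h2 hiAm1) := by
        intro t h0 h1 h2
        simp only [hGdef, if_neg (Nat.not_lt.mpr h1), if_pos h2]
        exact List.getD_eq_getElem _ _ (lt_of_le_of_lt h2 hiAm1)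
      have hG3 : ∀ (t : ℕ) (h0 : t < amax.length) (h2 : t = iA - 1), G ⟨t, h0⟩ = b := by
        intro t h0 h2
        simp only [hGdef, if_neg (show ¬ t < sG by omega),
          if_neg (show ¬ t + 1 ≤ iA - 1 by omega), if_pos h2]
      have hG4 : ∀ (t : ℕ) (h0 : t < amax.length) (h1 : iA ≤ t), G ⟨t, h0⟩ = amax[t] := by
        intro t h0 h1
        simp only [hGdef, if_neg (show ¬ t < sG by omega),
          if_neg (show ¬ t + 1 ≤ iA - 1 by omega), if_neg (show ¬ t = iA - 1 by omega)]
        exact List.getD_eq_getElem _ _ h0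
      set α' := List.ofFn G with hα'def
      have hα'len : α'.length = amax.length := List.length_ofFn
      have hα'get : ∀ (t : ℕ) (h : t < amax.length), α'[t]'(by omega) = G ⟨t, h⟩ := by
        intro t h
        rw [List.getElem_ofFn]
      have hchainA' : α'.Chain' (· < ·) := by
        refine List.isChain_iff_getElem.mpr ?_
        intro t ht
        rw [hα'len] at ht
        have ht1 : t + 1 < amax.length := by omega
        have ht0 : t < amax.length := by omega
        rw [hα'get t ht0, hα'get (t+1) ht1]
        rcases lt_or_ge (t+1) sG with c1 | c1
        · rw [hG1 t ht0 (show t < sG by omega), hG1 (t+1) ht1 (show t+1 < sG by omega)]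
          exact hmonoA t (t+1) ht0 ht1 (Nat.lt_succ_self t)
        · rcases lt_or_ge t sG with c2 | c2
          · rw [hG1 t ht0 (show t < sG by omega)]
            rcases le_or_gt (t+2) (iA-1) with c3 | c3
            · rw [hG2 (t+1) ht1 (show sG ≤ t+1 by omega) (show t+1+1 ≤ iA-1 by omega)]
              exact hmonoA t (t+2) ht0 (by omega) (by omega)
            · rw [hG3 (t+1) ht1 (show t+1 = iA-1 by omega)]
              exact (hAlt_b t ht0).mpr (by omega)
          · rcases le_or_gt (t+1) (iA-1) with c3 | c3
            · rw [hG2 t ht0 (show sG ≤ t by omega) (show t+1 ≤ iA-1 by omega)]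
              rcases le_or_gt (t+2) (iA-1) with c4 | c4
              · rw [hG2 (t+1) ht1 (show sG ≤ t+1 by omega) (show t+1+1 ≤ iA-1 by omega)]
                exact hmonoA (t+1) (t+2) ht1 (by omega) (Nat.lt_succ_self _)
              · rw [hG3 (t+1) ht1 (show t+1 = iA-1 by omega)]
                exact (hAlt_b (t+1) ht1).mpr (by omega)
            · rcases Nat.lt_or_ge t iA with c4 | c4
              · rw [hG3 t ht0 (show t = iA-1 by omega),
                  hG4 (t+1) ht1 (show iA ≤ t+1 by omega)]
                exact hAgt_b (t+1) ht1 (by omega)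
              · rw [hG4 t ht0 (show iA ≤ t by omega),
                  hG4 (t+1) ht1 (show iA ≤ t+1 by omega)]
                exact hmonoA t (t+1) ht0 ht1 (Nat.lt_succ_self t)
      have hforallA : List.Forall₂ (· ≤ ·) α' Wl := by
        rw [List.forall₂_iff_get]
        refine ⟨by rw [hα'len, hlenA], ?_⟩
        intro t h1 h2
        rw [hα'len] at h1
        rw [List.get_eq_getElem, List.get_eq_getElem]
        simp only [hα'len]
        rw [hα'get t h1]
        rcases lt_or_ge t sG with c1 | c1
        · rw [hG1 t h1 c1]
          exact hgA t h1
        · rcases le_or_gt (t+1) (iA-1) with c2 | c2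
          · rw [hG2 t h1 c1 c2]
            have ht1 : t + 1 < amax.length := lt_of_le_of_lt c2 hiAm1
            have hvη2 : amax[t+1]'ht1 ∈ η₂ := by
              have := hmid (t+1) (by omega) c2
              rwa [List.getD_eq_getElem _ _ ht1] at this
            have hvB : amax[t+1]'ht1 ∈ bmax := List.mem_toFinset.mp (hE2B hvη2)
            obtain ⟨hpB, hpv⟩ := mem_index hsB hvB
            have hvWk : Wk.countP (pb (amax[t+1]'ht1)) ≤ bmax.countP (pb (amax[t+1]'ht1)) := by
              apply countP_le_of_le_get hsWk
                (show bmax.countP (pb (amax[t+1]'ht1)) < Wk.length by omega)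
              have := hgB _ hpB
              rwa [hpv] at this
            have hvb : amax[t+1]'ht1 < b := (hAlt_b (t+1) ht1).mpr (by omega)
            have hsplB := countP_split bmax (le_of_lt hvb)
            have hsplA := countP_split amax (le_of_lt hvb)
            have hcv : amax.countP (pb (amax[t+1]'ht1)) = t + 1 := countP_get hsA ht1
            have hmidle : amax.countP (mid (amax[t+1]'ht1) b)
                ≤ bmax.countP (mid (amax[t+1]'ht1) b) := by
              apply countP_le_of_subset hndA hndB
              intro x hx hq
              simp only [mid, decide_eq_true_eq] at hq
              obtain ⟨hmx, hxv⟩ := mem_index hsA hx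
              have hmge : t + 1 ≤ amax.countP (pb x) := by
                have hh := (le_get_iff hsA hmx (v := amax[t+1]'ht1)).mp
                  (by rw [hxv]; exact hq.1)
                omega
              have hmlt : amax.countP (pb x) < iA := by
                rw [hidef]
                exact lt_countP_of_get_lt hsA hmx (by rw [hxv]; exact hq.2)
              have hxη2 : x ∈ η₂ := by
                have := hmid (amax.countP (pb x)) (by omega) (by omega)
                rwa [List.getD_eq_getElem _ _ hmx, hxv] at this
              exact List.mem_toFinset.mp (hE2B hxη2)
            have hdc := hdecomp (amax[t+1]'ht1)
            have hcXv : (X.filter (fun x => pb (amax[t+1]'ht1) x = true)).card ≤ cX := by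
              rw [hcXdef]
              apply Finset.card_le_card
              intro x hx
              simp only [Finset.mem_filter, pb, decide_eq_true_eq] at *
              exact ⟨hx.1, by omega⟩
            apply (le_get_iff hsWl h2).mpr
            omega
          · rcases Nat.lt_or_ge t iA with c3 | c3
            · rw [hG3 t h1 (show t = iA-1 by omega)]
              have hdc := hdecomp b
              apply (le_get_iff hsWl h2).mpr
              omega
            · rw [hG4 t h1 (show iA ≤ t by omega)]
              exact hgA t h1
      have hE2α' : η₂ ⊆ α'.toFinset := by
        intro y hy
        rw [List.mem_toFinset, hα'def, List.mem_ofFn]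
        have hyA : y ∈ amax := List.mem_toFinset.mp (hE2A hy)
        obtain ⟨m, hm, hym⟩ := List.mem_iff_getElem.mp hyA
        have hms : m ≠ sG := by
          intro e
          subst e
          apply hPs
          rw [List.getD_eq_getElem _ _ hm, hym]
          exact hy
        rcases lt_or_ge m sG with c | c
        · exact ⟨⟨m, hm⟩, by rw [hG1 m hm c]; exact hym⟩
        · have c' : sG < m := by omega
          rcases le_or_gt m (iA-1) with c2 | c2
          · refine ⟨⟨m - 1, by omega⟩, ?_⟩
            rw [hG2 (m-1) (by omega) (show sG ≤ m-1 by omega) (show m-1+1 ≤ iA-1 by omega), ← hym]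
            congr 1
            show m - 1 + 1 = m
            omega
          · exact ⟨⟨m, hm⟩, by rw [hG4 m hm (show iA ≤ m by omega)]; exact hym⟩
      have hAEα' : α'.toFinset ⊆ η₁ ∪ η₂ := by
        intro x hx
        rw [List.mem_toFinset, hα'def, List.mem_ofFn] at hx
        obtain ⟨⟨tv, htv⟩, ht⟩ := hx
        have hval : G ⟨tv, htv⟩ ∈ amax ∨ G ⟨tv, htv⟩ = b := by
          rcases lt_or_ge tv sG with c | c
          · rw [hG1 tv htv c]; exact Or.inl (List.getElem_mem _)
          · rcases le_or_gt (tv+1) (iA-1) with c2 | c2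
            · rw [hG2 tv htv c c2]; exact Or.inl (List.getElem_mem _)
            · rcases Nat.lt_or_ge tv iA with c3 | c3
              · rw [hG3 tv htv (show tv = iA-1 by omega)]; exact Or.inr rfl
              · rw [hG4 tv htv c3]; exact Or.inl (List.getElem_mem _)
        rcases hval with h | h
        · exact hAE (List.mem_toFinset.mpr (ht ▸ h))
        · rw [← ht, h]
          exact Finset.mem_union_left _ hbη
      have hα'mem : α' ∈ Aeta w l η₁ η₂ :=
        ⟨⟨hchainA', hforallA⟩, hE2α', hAEα'⟩
      have hcomp := (List.forall₂_iff_get.mp (hamax α' hα'mem)).2 (iA - 1)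
        (by rw [hα'len]; omega) (by omega)
      rw [List.get_eq_getElem, List.get_eq_getElem] at hcomp
      simp only [hα'len] at hcomp
      rw [hα'get (iA-1) (by omega), hG3 (iA-1) hiAm1 rfl] at hcomp
      have := (hAlt_b (iA-1) hiAm1).mpr (by omega)
      omega
  refine ⟨hsub, ?_⟩
  -- second goal
  ext x
  simp only [Finset.mem_inter, List.mem_toFinset]
  constructor
  · rintro ⟨hx1, hx2⟩
    have hxa : x ∈ amax := List.mem_toFinset.mp (hsub (List.mem_toFinset.mpr hx2))
    have hcnt := congrArg (Multiset.count x) hbmin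
    simp only [Multiset.count_add, Multiset.count_nsmul] at hcnt
    have hA1 : Multiset.count x ↑amax = 1 := by
      rw [Multiset.coe_count]
      exact List.count_eq_one_of_mem hndA hxa
    have hb1 : Multiset.count x bmin.val = 1 :=
      Multiset.count_eq_one_of_mem bmin.nodup hx1
    by_contra hx3
    have hz2 : Multiset.count x η₂.val = 0 := Multiset.count_eq_zero.mpr hx3
    have hle1 : Multiset.count x η₁.val ≤ 1 := by
      rcases Finset.decidableMem x η₁ with h | h
      · simp [Multiset.count_eq_zero.mpr h]
      · simp [Multiset.count_eq_one_of_mem η₁.nodup h]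
    omega
  · intro hx
    have hxb : x ∈ bmax := List.mem_toFinset.mp (hE2B hx)
    refine ⟨?_, hxb⟩
    have hxa : x ∈ amax := List.mem_toFinset.mp (hE2A hx)
    have hcnt := congrArg (Multiset.count x) hbmin
    simp only [Multiset.count_add, Multiset.count_nsmul] at hcnt
    have hA1 : Multiset.count x ↑amax = 1 := by
      rw [Multiset.coe_count]
      exact List.count_eq_one_of_mem hndA hxa
    have h2 : Multiset.count x η₂.val = 1 :=
      Multiset.count_eq_one_of_mem η₂.nodup hx
    have h1 : Multiset.count x η₁.val = 0 :=
      Multiset.count_eq_zero.mpr (fun h => (Finset.disjoint_left.mp hd h) hx)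
    have : 0 < Multiset.count x bmin.val := by omega
    exact Finset.mem_def.mpr (Multiset.count_pos.mp this)
end

section
/- Let k ≤ l, w ∈ S_n, and η a multiset with |η₁| + 2|η₂| = k + l. Let α_max be the maximal element of A_l^η(w), β_min its complement in η, β_max the maximal element of A_k^η(w), and α_min its complement in η. Then the following are equivalent: β_min ∈ A_k(w); α_min ∈ A_l(w); η can be written as α + β for some α ∈ A_l(w) and β ∈ A_k(w). -/
open List


section helpers

lemma sort_coe_of_chain {a : List ℕ} (h : a.Chain' (· < ·)) :
    (↑a : Multiset ℕ).sort (· ≤ ·) = a :=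
  List.Perm.eq_of_pairwise' (Multiset.pairwise_sort _ _)
    ((List.isChain_iff_pairwise.1 h).imp le_of_lt) (Multiset.coe_eq_coe.1 (Multiset.sort_eq _ _))

lemma nodup_of_chain {a : List ℕ} (h : a.Chain' (· < ·)) : a.Nodup :=
  (List.isChain_iff_pairwise.1 h).imp ne_of_lt

lemma forall₂_le_trans {a b c : List ℕ} (h1 : Forall₂ (· ≤ ·) a b)
    (h2 : Forall₂ (· ≤ ·) b c) : Forall₂ (· ≤ ·) a c := by
  induction h1 generalizing c with
  | nil => cases h2; exact .nil
  | cons hab _ ih => cases h2 with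
    | cons hbc h2' => exact .cons (le_trans hab hbc) (ih h2')

lemma subset_helper {η₁ η₂ : Finset ℕ} (hd : Disjoint η₁ η₂) {a b : List ℕ}
    (hna : a.Nodup) (hnb : b.Nodup)
    (hs : (↑a + ↑b : Multiset ℕ) = η₁.val + 2 • η₂.val) :
    η₂ ⊆ a.toFinset ∧ a.toFinset ⊆ η₁ ∪ η₂ := by
  have hca : ∀ e, Multiset.count e (↑a : Multiset ℕ) ≤ 1 :=
    Multiset.nodup_iff_count_le_one.1 (by exact hna)
  have hcb : ∀ e, Multiset.count e (↑b : Multiset ℕ) ≤ 1 :=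
    Multiset.nodup_iff_count_le_one.1 (by exact hnb)
  constructor
  · intro e he
    have hcount := congrArg (Multiset.count e) hs
    simp only [Multiset.count_add, Multiset.count_nsmul] at hcount
    have h1 : Multiset.count e η₂.val = 1 := Multiset.count_eq_one_of_mem η₂.nodup he
    have h0 : Multiset.count e η₁.val = 0 := by
      rw [Multiset.count_eq_zero]
      exact fun h => (Finset.disjoint_left.1 hd h) he
    rw [List.mem_toFinset, ← Multiset.mem_coe, ← Multiset.count_pos]
    have := hca e; have := hcb e
    omega
  · intro e he
    rw [List.mem_toFinset] at he
    have hcount := congrArg (Multiset.count e) hs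
    simp only [Multiset.count_add, Multiset.count_nsmul] at hcount
    have hpos : 0 < Multiset.count e (↑a : Multiset ℕ) := Multiset.count_pos.2 he
    have h1 : 0 < Multiset.count e η₁.val ∨ 0 < Multiset.count e η₂.val := by omega
    rw [Finset.mem_union]
    rcases h1 with h | h
    · exact Or.inl (Multiset.count_pos.1 h)
    · exact Or.inr (Multiset.count_pos.1 h)

lemma countP_le_of_forall₂ {a b : List ℕ} (h : List.Forall₂ (· ≤ ·) a b) (x : ℕ) :
    b.countP (fun y => y ≤ x) ≤ a.countP (fun y => y ≤ x) := by
  induction h with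
  | nil => simp
  | @cons a0 b0 a' b' hab _ ih =>
    by_cases hb : b0 ≤ x
    · have ha : a0 ≤ x := le_trans hab hb
      simp only [List.countP_cons]
      simp [hb, ha, ih]
    · calc (b0 :: b').countP (fun y => decide (y ≤ x)) = b'.countP (fun y => decide (y ≤ x)) := by
            rw [List.countP_cons_of_neg]; simp [hb]
        _ ≤ a'.countP (fun y => decide (y ≤ x)) := ih
        _ ≤ (a0 :: a').countP (fun y => decide (y ≤ x)) := by
            rw [List.countP_cons]; omega

lemma forall₂_of_countP : ∀ {a b : List ℕ}, a.Pairwise (· ≤ ·) → b.Pairwise (· ≤ ·) →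
    a.length = b.length →
    (∀ x, b.countP (fun y => y ≤ x) ≤ a.countP (fun y => y ≤ x)) →
    List.Forall₂ (· ≤ ·) a b
  | [], [], _, _, _, _ => .nil
  | [], b0 :: b', _, _, hl, _ => by simp at hl
  | a0 :: a', [], _, _, hl, _ => by simp at hl
  | a0 :: a', b0 :: b', ha, hb, hl, h => by
    have hab : a0 ≤ b0 := by
      by_contra hc
      push_neg at hc
      have h1 := h b0
      have hz : (a0 :: a').countP (fun y => y ≤ b0) = 0 := by
        rw [List.countP_eq_zero]
        intro y hy
        simp only [decide_eq_true_eq]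
        rcases List.mem_cons.1 hy with rfl | hy
        · omega
        · have := List.rel_of_pairwise_cons ha hy; omega
      rw [hz] at h1
      simp [List.countP_cons] at h1
    refine .cons hab (forall₂_of_countP ha.of_cons hb.of_cons (by simpa using hl) ?_)
    intro x
    by_cases hx : b0 ≤ x
    · have h1 := h x
      have hax : a0 ≤ x := le_trans hab hx
      simp only [List.countP_cons, hx, hax] at h1
      split_ifs at h1 <;> omega
    · have hz : b'.countP (fun y => y ≤ x) = 0 := by
        rw [List.countP_eq_zero]
        intro y hy
        simp only [decide_eq_true_eq]
        have := List.rel_of_pairwise_cons hb hy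
        omega
      omega

lemma countP_sort (m : Multiset ℕ) (x : ℕ) :
    (m.sort (· ≤ ·)).countP (fun y => y ≤ x) = Multiset.countP (· ≤ x) m := by
  conv_rhs => rw [← Multiset.sort_eq m (· ≤ ·)]
  rw [Multiset.coe_countP]

lemma key_antitone {s t s' t' : Multiset ℕ} (hsum : s + t = s' + t')
    (hcard : Multiset.card s = Multiset.card s')
    (h : List.Forall₂ (· ≤ ·) (s.sort (· ≤ ·)) (s'.sort (· ≤ ·))) :
    List.Forall₂ (· ≤ ·) (t'.sort (· ≤ ·)) (t.sort (· ≤ ·)) := by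
  have hct : Multiset.card t = Multiset.card t' := by
    have := congrArg Multiset.card hsum
    simp only [Multiset.card_add] at this
    omega
  apply forall₂_of_countP (Multiset.pairwise_sort _ _) (Multiset.pairwise_sort _ _)
  · simp [Multiset.length_sort, hct]
  · intro x
    rw [countP_sort, countP_sort]
    have hs := countP_le_of_forall₂ h x
    rw [countP_sort, countP_sort] at hs
    have := congrArg (Multiset.countP (· ≤ x)) hsum
    simp only [Multiset.countP_add] at this
    omega

end helpers

/-- `β_min ∈ A_k(w)` iff `α_min ∈ A_l(w)` iff `η ∈ B̃_{k,l}(w)`. -/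
theorem stmt14 (n : ℕ) (w : Equiv.Perm (Fin n)) (k l : ℕ) (hkl : k ≤ l)
    (η₁ η₂ : Finset ℕ) (hd : Disjoint η₁ η₂)
    (hc : η₁.card + 2 * η₂.card = k + l)
    (amax : List ℕ) (ham : amax ∈ Aeta w l η₁ η₂)
    (hamax : ∀ a ∈ Aeta w l η₁ η₂, List.Forall₂ (· ≤ ·) a amax)
    (bmax : List ℕ) (hbm : bmax ∈ Aeta w k η₁ η₂)
    (hbmax : ∀ b ∈ Aeta w k η₁ η₂, List.Forall₂ (· ≤ ·) b bmax)
    (bmin : Finset ℕ)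
    (hbmin : (↑amax : Multiset ℕ) + bmin.val = η₁.val + 2 • η₂.val)
    (amin : Finset ℕ)
    (hamin : (↑bmax : Multiset ℕ) + amin.val = η₁.val + 2 • η₂.val) :
    List.TFAE [
      bmin.sort (· ≤ ·) ∈ A w k,
      amin.sort (· ≤ ·) ∈ A w l,
      ∃ a ∈ A w l, ∃ b ∈ A w k, (↑a + ↑b : Multiset ℕ) = η₁.val + 2 • η₂.val] := by
  obtain ⟨hamA, ham2, ham12⟩ := ham
  obtain ⟨hbmA, hbm2, hbm12⟩ := hbm
  have hsortb : (↑(bmin.sort (· ≤ ·)) : Multiset ℕ) = bmin.val := Multiset.sort_eq _ _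
  have hsorta : (↑(amin.sort (· ≤ ·)) : Multiset ℕ) = amin.val := Multiset.sort_eq _ _
  tfae_have 1 → 3
  | h1 => ⟨amax, hamA, bmin.sort (· ≤ ·), h1, by rw [hsortb]; exact hbmin⟩
  tfae_have 2 → 3
  | h2 => ⟨amin.sort (· ≤ ·), h2, bmax, hbmA, by rw [hsorta, add_comm]; exact hamin⟩
  tfae_have 3 → 1
  | ⟨a, haA, b, hbA, hab⟩ => by
    have hna : a.Nodup := nodup_of_chain haA.1
    have hnb : b.Nodup := nodup_of_chain hbA.1
    have hsa := subset_helper hd hna hnb hab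
    have haAeta : a ∈ Aeta w l η₁ η₂ := ⟨haA, hsa.1, hsa.2⟩
    have hle := hamax a haAeta
    have hcard : Multiset.card (↑a : Multiset ℕ) = Multiset.card (↑amax : Multiset ℕ) := by
      simp only [Multiset.coe_card]
      rw [haA.2.length_eq, hamA.2.length_eq]
    have hk := key_antitone (s := ↑a) (t := ↑b) (s' := ↑amax) (t' := bmin.val)
      (hab.trans hbmin.symm) hcard
      (by rw [sort_coe_of_chain haA.1, sort_coe_of_chain hamA.1]; exact hle)
    rw [sort_coe_of_chain hbA.1] at hk
    refine ⟨List.isChain_iff_pairwise.2 (Finset.sortedLT_sort bmin).pairwise, ?_⟩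
    exact forall₂_le_trans hk hbA.2
  tfae_have 3 → 2
  | ⟨a, haA, b, hbA, hab⟩ => by
    have hna : a.Nodup := nodup_of_chain haA.1
    have hnb : b.Nodup := nodup_of_chain hbA.1
    have hsb := subset_helper hd hnb hna (by rwa [add_comm])
    have hbAeta : b ∈ Aeta w k η₁ η₂ := ⟨hbA, hsb.1, hsb.2⟩
    have hle := hbmax b hbAeta
    have hcard : Multiset.card (↑b : Multiset ℕ) = Multiset.card (↑bmax : Multiset ℕ) := by
      simp only [Multiset.coe_card]
      rw [hbA.2.length_eq, hbmA.2.length_eq]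
    have hk := key_antitone (s := ↑b) (t := ↑a) (s' := ↑bmax) (t' := amin.val)
      (by rw [add_comm]; exact hab.trans hamin.symm) hcard
      (by rw [sort_coe_of_chain hbA.1, sort_coe_of_chain hbmA.1]; exact hle)
    rw [sort_coe_of_chain haA.1] at hk
    refine ⟨List.isChain_iff_pairwise.2 (Finset.sortedLT_sort amin).pairwise, ?_⟩
    exact forall₂_le_trans hk haA.2
  tfae_finish
end

section
/- Let k ≤ l, w ∈ S_n, and suppose η = α + β for some α ∈ A_l(w), β ∈ A_k(w). Then for any set β' of size k with η₂ ⊆ β' ⊆ η₁ ∪ η₂, the following are equivalent: β_min ≤ β' ≤ β_max (entrywise on the sorted sequences); β' ∈ A_k(w) and there exists α' ∈ A_l(w) with α' + β' = η. -/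
/-- countP of `≤ x` is antitone along entrywise `≤` of lists. -/
lemma cnt_mono {s t : List ℕ} (h : List.Forall₂ (· ≤ ·) s t) (x : ℕ) :
    t.countP (fun y => y ≤ x) ≤ s.countP (fun y => y ≤ x) := by
  induction h with
  | nil => simp
  | @cons a b s t hab h ih =>
      rw [List.countP_cons, List.countP_cons]
      by_cases h1 : a ≤ x <;> by_cases h2 : b ≤ x <;> simp [h1, h2] <;> omega

/-- Entrywise comparison of sorted lists from the counting functions. -/
lemma forall2_of_cnt : ∀ {s t : List ℕ}, s.Pairwise (· ≤ ·) → t.Pairwise (· ≤ ·) →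
    s.length = t.length →
    (∀ x, t.countP (fun y => y ≤ x) ≤ s.countP (fun y => y ≤ x)) →
    List.Forall₂ (· ≤ ·) s t
  | [], [], _, _, _, _ => .nil
  | [], _ :: _, _, _, hlen, _ => by simp at hlen
  | _ :: _, [], _, _, hlen, _ => by simp at hlen
  | a :: s, b :: t, hs, ht, hlen, h => by
      obtain ⟨hs1, hs2⟩ := List.pairwise_cons.1 hs
      obtain ⟨ht1, ht2⟩ := List.pairwise_cons.1 ht
      have hab : a ≤ b := by
        by_contra hab
        push_neg at hab
        have h0 : (a :: s).countP (fun y => y ≤ b) = 0 := by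
          rw [List.countP_eq_zero]
          intro y hy
          rcases List.mem_cons.1 hy with rfl | hy
          · simp; omega
          · have := hs1 y hy; simp; omega
        have h1 := h b
        rw [h0, Nat.le_zero, List.countP_cons] at h1
        simp at h1
      refine .cons hab (forall2_of_cnt hs2 ht2 (by simpa using hlen) ?_)
      intro x
      have h1 := h x
      rw [List.countP_cons, List.countP_cons] at h1
      by_cases hax : a ≤ x
      · by_cases hbx : b ≤ x
        · simp [hax, hbx] at h1; omega
        · have : t.countP (fun y => y ≤ x) = 0 := by
            rw [List.countP_eq_zero]
            intro y hy
            have := ht1 y hy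
            simp; omega
          omega
      · have hs0 : s.countP (fun y => y ≤ x) = 0 := by
          rw [List.countP_eq_zero]
          intro y hy
          have := hs1 y hy
          simp; omega
        have ht0 : t.countP (fun y => y ≤ x) = 0 := by
          rw [List.countP_eq_zero]
          intro y hy
          have := hab.trans (ht1 y hy)
          simp; omega
        omega

/-- The complement identity for `η = η₁ + 2η₂`. -/
lemma hkey_lemma (η₁ η₂ β : Finset ℕ) (hd : Disjoint η₁ η₂) (hβ1 : η₂ ⊆ β) (hβ2 : β ⊆ η₁ ∪ η₂) :
    ((η₁ \ β) ∪ η₂).val + β.val = η₁.val + 2 • η₂.val := by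
  refine Multiset.ext.2 fun x => ?_
  rw [Multiset.count_add, Multiset.count_add, Multiset.count_nsmul,
    Multiset.count_eq_of_nodup ((η₁ \ β) ∪ η₂).nodup, Multiset.count_eq_of_nodup β.nodup,
    Multiset.count_eq_of_nodup η₁.nodup, Multiset.count_eq_of_nodup η₂.nodup]
  simp only [Finset.mem_val, Finset.mem_union, Finset.mem_sdiff]
  have hd' : x ∈ η₁ → x ∈ η₂ → False := fun h1 h2 => Finset.disjoint_left.1 hd h1 h2
  have hb1 : x ∈ η₂ → x ∈ β := fun h => hβ1 h
  have hb2 : x ∈ β → x ∈ η₁ ∨ x ∈ η₂ := fun h => Finset.mem_union.1 (hβ2 h)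
  by_cases h1 : x ∈ η₁ <;> by_cases h2 : x ∈ η₂ <;> by_cases h3 : x ∈ β
  · exact absurd h2 (fun h => hd' h1 h)
  · exact absurd h2 (fun h => hd' h1 h)
  · simp [h1, h2, h3]
  · simp [h1, h2, h3]
  · simp [h1, h2, h3]
  · exact absurd (hb1 h2) h3
  · rcases hb2 h3 with h | h
    · exact absurd h h1
    · exact absurd h h2
  · simp [h1, h2, h3]

/-- A nodup list summing with `β` to `η` lies between `η₂` and `η₁ ∪ η₂`. -/
lemma mem_lemma (η₁ η₂ β : Finset ℕ)
    (a : List ℕ) (hnd : a.Nodup)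
    (heq : (↑a : Multiset ℕ) + β.val = η₁.val + 2 • η₂.val) :
    η₂ ⊆ a.toFinset ∧ a.toFinset ⊆ η₁ ∪ η₂ := by
  have hcnt : ∀ x : ℕ, (if x ∈ a then 1 else 0) + (if x ∈ β then 1 else 0)
      = (if x ∈ η₁ then 1 else 0) + 2 * (if x ∈ η₂ then 1 else 0) := by
    intro x
    have h := congrArg (Multiset.count x) heq
    rw [Multiset.count_add, Multiset.count_add, Multiset.count_nsmul,
      Multiset.count_eq_of_nodup (show Multiset.Nodup (↑a : Multiset ℕ) from hnd),
      Multiset.count_eq_of_nodup β.nodup, Multiset.count_eq_of_nodup η₁.nodup,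
      Multiset.count_eq_of_nodup η₂.nodup] at h
    simpa only [Multiset.mem_coe, Finset.mem_val] using h
  constructor
  · intro x hx
    have h := hcnt x
    rw [List.mem_toFinset]
    by_cases hxa : x ∈ a
    · exact hxa
    · exfalso
      simp only [hx, hxa, if_true, if_false] at h
      split_ifs at h <;> omega
  · intro x hx
    rw [List.mem_toFinset] at hx
    have h := hcnt x
    rw [Finset.mem_union]
    by_cases h1 : x ∈ η₁
    · exact Or.inl h1
    · by_cases h2 : x ∈ η₂
      · exact Or.inr h2
      · exfalso
        simp only [hx, h1, h2, if_true, if_false] at h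
        split_ifs at h <;> omega

/-- Bridge: countP of a finset's sorted list equals the multiset countP of its `val`. -/
lemma sort_countP (S : Finset ℕ) (x : ℕ) :
    (S.sort (· ≤ ·)).countP (fun y => y ≤ x) = Multiset.countP (fun y => y ≤ x) S.val := by
  rw [← Finset.sort_eq S (· ≤ ·), Multiset.coe_countP]

/-- For a size-`k` set `β'` with `η₂ ⊆ β' ⊆ η₁ ∪ η₂`: `β_min ≤ β' ≤ β_max` iff
`β' ∈ A_k(w)` and `η = α' + β'` for some `α' ∈ A_l(w)`. -/
theorem stmt15 (n : ℕ) (w : Equiv.Perm (Fin n)) (k l : ℕ) (hkl : k ≤ l)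
    (η₁ η₂ : Finset ℕ) (hd : Disjoint η₁ η₂)
    (a0 : List ℕ) (ha0 : a0 ∈ A w l) (b0 : List ℕ) (hb0 : b0 ∈ A w k)
    (hsum : (↑a0 + ↑b0 : Multiset ℕ) = η₁.val + 2 • η₂.val)
    (amax : List ℕ) (ham : amax ∈ Aeta w l η₁ η₂)
    (hamax : ∀ a ∈ Aeta w l η₁ η₂, List.Forall₂ (· ≤ ·) a amax)
    (bmax : List ℕ) (hbm : bmax ∈ Aeta w k η₁ η₂)
    (hbmax : ∀ b ∈ Aeta w k η₁ η₂, List.Forall₂ (· ≤ ·) b bmax)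
    (bmin : Finset ℕ)
    (hbmin : (↑amax : Multiset ℕ) + bmin.val = η₁.val + 2 • η₂.val)
    (β : Finset ℕ) (hβc : β.card = k) (hβ1 : η₂ ⊆ β) (hβ2 : β ⊆ η₁ ∪ η₂) :
    (List.Forall₂ (· ≤ ·) (bmin.sort (· ≤ ·)) (β.sort (· ≤ ·)) ∧
      List.Forall₂ (· ≤ ·) (β.sort (· ≤ ·)) bmax) ↔
    (β.sort (· ≤ ·) ∈ A w k ∧
      ∃ a ∈ A w l, (↑a : Multiset ℕ) + β.val = η₁.val + 2 • η₂.val) := by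
  classical
  have hWl : amax.length = (wSorted w l).length := ham.1.2.length_eq
  have hWk : bmax.length = (wSorted w k).length := hbm.1.2.length_eq
  have hηcard : Multiset.card (η₁.val + 2 • η₂.val)
      = (wSorted w l).length + (wSorted w k).length := by
    rw [← hsum]
    simp [ha0.2.length_eq, hb0.2.length_eq]
  have hbmincard : amax.length + bmin.card = (wSorted w l).length + (wSorted w k).length := by
    have h := congrArg Multiset.card hbmin
    rw [hηcard] at h
    simpa using h
  -- counting function of η
  set C : ℕ → ℕ := fun x => Multiset.countP (fun y => y ≤ x) (η₁.val + 2 • η₂.val) with hC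
  have hCbmin : ∀ x, amax.countP (fun y => y ≤ x)
      + Multiset.countP (fun y => y ≤ x) bmin.val = C x := by
    intro x
    have h := congrArg (Multiset.countP (fun y => y ≤ x)) hbmin
    rwa [Multiset.countP_add, Multiset.coe_countP] at h
  constructor
  · rintro ⟨h1, h2⟩
    have hkk : k = (wSorted w k).length := by
      have h := h2.length_eq
      rw [Finset.length_sort, hβc, hWk] at h
      exact h
    have hβA : β.sort (· ≤ ·) ∈ A w k := by
      refine ⟨(Finset.sortedLT_sort β).isChain, ?_⟩
      refine forall2_of_cnt (Finset.pairwise_sort _ _) (Finset.pairwise_sort _ _) ?_ ?_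
      · rw [Finset.length_sort, hβc]; exact hkk
      · intro x
        have e1 := cnt_mono hbm.1.2 x
        have e2 := cnt_mono h2 x
        omega
    refine ⟨hβA, ((η₁ \ β) ∪ η₂).sort (· ≤ ·), ⟨?_, ?_⟩, ?_⟩
    · exact (Finset.sortedLT_sort _).isChain
    · -- Forall₂ with wSorted w l
      have hkey := hkey_lemma η₁ η₂ β hd hβ1 hβ2
      have hcard : Multiset.card ((η₁ \ β) ∪ η₂).val + Multiset.card β.val
          = (wSorted w l).length + (wSorted w k).length := by
        have h := congrArg Multiset.card hkey
        rw [Multiset.card_add, hηcard] at h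
        exact h
      refine forall2_of_cnt (Finset.pairwise_sort _ _) (Finset.pairwise_sort _ _) ?_ ?_
      · rw [Finset.length_sort]
        have hc1 : ((η₁ \ β) ∪ η₂).card = Multiset.card ((η₁ \ β) ∪ η₂).val := rfl
        have hc2 : β.card = Multiset.card β.val := rfl
        omega
      · intro x
        have hkeyC : Multiset.countP (fun y => y ≤ x) ((η₁ \ β) ∪ η₂).val
            + Multiset.countP (fun y => y ≤ x) β.val = C x := by
          have h := congrArg (Multiset.countP (fun y => y ≤ x)) hkey
          rwa [Multiset.countP_add] at h
        have e1 := cnt_mono ham.1.2 x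
        have e2 := cnt_mono h1 x
        rw [sort_countP, sort_countP] at e2
        have e3 := hCbmin x
        rw [sort_countP]
        omega
    · rw [Finset.sort_eq]
      exact hkey_lemma η₁ η₂ β hd hβ1 hβ2
  · rintro ⟨hβA, a, haA, haeq⟩
    have hkk : k = (wSorted w k).length := by
      have h := hβA.2.length_eq
      rw [Finset.length_sort, hβc] at h
      exact h
    have hand : a.Nodup :=
      (List.isChain_iff_pairwise.1 haA.1).imp fun h => Nat.ne_of_lt h
    obtain ⟨hsub1, hsub2⟩ := mem_lemma η₁ η₂ β a hand haeq
    have h3 := hamax a ⟨haA, hsub1, hsub2⟩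
    have h2 := hbmax (β.sort (· ≤ ·))
      ⟨hβA, by rw [Finset.sort_toFinset]; exact hβ1, by rw [Finset.sort_toFinset]; exact hβ2⟩
    refine ⟨?_, h2⟩
    refine forall2_of_cnt (Finset.pairwise_sort _ _) (Finset.pairwise_sort _ _) ?_ ?_
    · rw [Finset.length_sort, Finset.length_sort, hβc]
      omega
    · intro x
      have haeqC : a.countP (fun y => y ≤ x)
          + Multiset.countP (fun y => y ≤ x) β.val = C x := by
        have h := congrArg (Multiset.countP (fun y => y ≤ x)) haeq
        rwa [Multiset.countP_add, Multiset.coe_countP] at h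
      have e1 := hCbmin x
      have e2 := cnt_mono h3 x
      rw [sort_countP, sort_countP]
      omega
end

section
/- Let k ≤ l and w ∈ S_n, and let η ∈ B̃_{k,l}(w), i.e., η = α + β for some α ∈ A_l(w) and β ∈ A_k(w). Define η ∈ B_{k,l}(w) if there exist presentations η = α + β = α' + β' with α, α' ∈ A_l(w), β, β' ∈ A_k(w), and α ≠ α', α ≠ β', β ≠ α', β ≠ β'. Then: if k < l, η ∉ B_{k,l}(w) if and only if |η₂| = k; if k = l, η ∉ B_{k,l}(w) if and only if |η₂| ≥ k − 1. -/
/-- `η ∈ B_{k,l}(w)`: `η` has two essentially different presentations as a sum of an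
element of `A_l(w)` and an element of `A_k(w)`. -/
def Bmem {n : ℕ} (w : Equiv.Perm (Fin n)) (k l : ℕ) (η : Multiset ℕ) : Prop :=
  ∃ a ∈ A w l, ∃ b ∈ A w k, ∃ a' ∈ A w l, ∃ b' ∈ A w k,
    (↑a + ↑b : Multiset ℕ) = η ∧ (↑a' + ↑b' : Multiset ℕ) = η ∧
    a ≠ a' ∧ a ≠ b' ∧ b ≠ a' ∧ b ≠ b'

/-- counting function: number of elements of `s` below `z` -/
def ct (s : Finset ℕ) (z : ℕ) : ℕ := (s.filter (· < z)).card

lemma ct_mono_z {s : Finset ℕ} {z z' : ℕ} (h : z ≤ z') : ct s z ≤ ct s z' := by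
  apply Finset.card_le_card
  intro e he
  simp only [Finset.mem_filter] at he ⊢
  exact ⟨he.1, lt_of_lt_of_le he.2 h⟩

lemma ct_subset {s t : Finset ℕ} (h : s ⊆ t) (z : ℕ) : ct s z ≤ ct t z := by
  apply Finset.card_le_card
  intro e he
  simp only [Finset.mem_filter] at he ⊢
  exact ⟨h he.1, he.2⟩

lemma ct_le_card (s : Finset ℕ) (z : ℕ) : ct s z ≤ s.card :=
  Finset.card_le_card (Finset.filter_subset _ s)

lemma ct_union {u v : Finset ℕ} (h : Disjoint u v) (z : ℕ) :
    ct (u ∪ v) z = ct u z + ct v z := by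
  unfold ct
  rw [Finset.filter_union, Finset.card_union_of_disjoint]
  exact Finset.disjoint_filter_filter h

lemma ct_erase {s : Finset ℕ} {x : ℕ} (h : x ∈ s) (z : ℕ) :
    ct s z = ct (s.erase x) z + (if x < z then 1 else 0) := by
  unfold ct
  rw [Finset.filter_erase]
  by_cases hx : x < z
  · have hmem : x ∈ s.filter (· < z) := Finset.mem_filter.mpr ⟨h, hx⟩
    have h1 : 1 ≤ (s.filter (· < z)).card := Finset.card_pos.mpr ⟨x, hmem⟩
    rw [Finset.card_erase_of_mem hmem]
    simp [hx]
    omega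
  · have : x ∉ s.filter (· < z) := by simp [Finset.mem_filter, hx]
    rw [Finset.erase_eq_of_notMem this]
    simp [hx]

lemma ct_insert {s : Finset ℕ} {x : ℕ} (h : x ∉ s) (z : ℕ) :
    ct (insert x s) z = ct s z + (if x < z then 1 else 0) := by
  unfold ct
  rw [Finset.filter_insert]
  by_cases hx : x < z
  · rw [if_pos hx, Finset.card_insert_of_notMem (by simp [Finset.mem_filter, h])]
    simp [hx]
  · simp [hx]

lemma ct_all {s : Finset ℕ} {z : ℕ} (h : ∀ e ∈ s, e < z) : ct s z = s.card := by
  unfold ct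
  rw [Finset.filter_true_of_mem h]

lemma ct_none {s : Finset ℕ} {z : ℕ} (h : ∀ e ∈ s, ¬ e < z) : ct s z = 0 := by
  unfold ct
  rw [Finset.filter_false_of_mem h]
  simp

lemma ct_split (s t : Finset ℕ) (z : ℕ) : ct s z = ct (s ∩ t) z + ct (s \ t) z := by
  have h1 : (s ∩ t) ∪ (s \ t) = s := by
    ext e; simp [Finset.mem_inter, Finset.mem_sdiff]; tauto
  have h2 : Disjoint (s ∩ t) (s \ t) := by
    rw [Finset.disjoint_left]
    intro e h3 h4
    simp only [Finset.mem_inter, Finset.mem_sdiff] at *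
    tauto
  conv_lhs => rw [← h1]
  rw [ct_union h2]

def ctL (p : List ℕ) (z : ℕ) : ℕ := (p.filter (fun t => t < z)).length

lemma ctL_cons (x : ℕ) (p : List ℕ) (z : ℕ) :
    ctL (x :: p) z = ctL p z + (if x < z then 1 else 0) := by
  unfold ctL
  rw [List.filter_cons]
  by_cases hx : x < z <;> simp [hx]

lemma sorted_lt_nodup {p : List ℕ} (h : p.Pairwise (· < ·)) : p.Nodup :=
  h.imp (fun hlt => ne_of_lt hlt)

lemma sorted_lt_le {p : List ℕ} (h : p.Pairwise (· < ·)) : p.Pairwise (· ≤ ·) :=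
  h.imp (fun hlt => le_of_lt hlt)

/-- coe to multiset equal implies ctL equal to ct of a finset -/
lemma ctL_eq_ct {p : List ℕ} {s : Finset ℕ} (h : (↑p : Multiset ℕ) = s.val) (z : ℕ) :
    ctL p z = ct s z := by
  unfold ctL ct
  have : (s.filter (· < z)).card = Multiset.card (Multiset.filter (· < z) s.val) := rfl
  rw [this, ← h]
  simp

lemma coe_toFinset_val {p : List ℕ} (h : p.Nodup) : p.toFinset.val = (↑p : Multiset ℕ) := by
  simp [List.toFinset, Multiset.toFinset, List.dedup_eq_self.mpr h]

lemma coe_sort_val (s : Finset ℕ) : (↑(s.sort (· ≤ ·)) : Multiset ℕ) = s.val :=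
  Finset.sort_eq s _

lemma sort_toFinset_eq {p : List ℕ} (h : p.Pairwise (· < ·)) :
    p.toFinset.sort (· ≤ ·) = p := by
  refine List.Perm.eq_of_pairwise' (Finset.pairwise_sort _ _) (sorted_lt_le h) ?_
  rw [← Multiset.coe_eq_coe, coe_sort_val, coe_toFinset_val (sorted_lt_nodup h)]

lemma eq_of_toFinset_eq {p q : List ℕ} (hp : p.Pairwise (· < ·)) (hq : q.Pairwise (· < ·))
    (h : p.toFinset = q.toFinset) : p = q := by
  rw [← sort_toFinset_eq hp, ← sort_toFinset_eq hq, h]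

lemma sort_sorted_lt' (s : Finset ℕ) : (s.sort (· ≤ ·)).Pairwise (· < ·) :=
  s.sortedLT_sort.pairwise

/-- key equivalence: entrywise domination of sorted lists via counting -/
lemma forall2_iff_ct {p q : List ℕ} (hp : p.Pairwise (· < ·)) (hq : q.Pairwise (· ≤ ·)) :
    List.Forall₂ (· ≤ ·) p q ↔
      (p.length = q.length ∧ ∀ z, ctL q z ≤ ctL p z) := by
  induction p generalizing q with
  | nil =>
    cases q with
    | nil => simp [List.Forall₂.nil]
    | cons b q' =>
      simp only [List.forall₂_nil_left_iff]
      constructor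
      · intro h; exact absurd h (by simp)
      · rintro ⟨h, -⟩; exact absurd h (by simp)
  | cons a p' ih =>
    cases q with
    | nil =>
      constructor
      · intro h; exact absurd h (by simp)
      · rintro ⟨h, -⟩; exact absurd h (by simp)
    | cons b q' =>
      have hp' : p'.Pairwise (· < ·) := hp.of_cons
      have hq' : q'.Pairwise (· ≤ ·) := hq.of_cons
      have hpa : ∀ e ∈ p', a < e := fun e he => List.rel_of_pairwise_cons hp he
      have hqb : ∀ e ∈ q', b ≤ e := fun e he => List.rel_of_pairwise_cons hq he
      constructor
      · intro hf
        rw [List.forall₂_cons] at hf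
        obtain ⟨hab, htail⟩ := hf
        rcases (ih hp' hq').mp htail with ⟨hlen, hct⟩
        refine ⟨by simp [hlen], fun z => ?_⟩
        rw [ctL_cons, ctL_cons]
        have := hct z
        by_cases hbz : b < z
        · have haz : a < z := lt_of_le_of_lt hab hbz
          simp [hbz, haz]; omega
        · simp [hbz]; omega
      · rintro ⟨hlen, hct⟩
        have hab : a ≤ b := by
          by_contra hcon
          push_neg at hcon
          have h1 := hct a
          rw [ctL_cons, ctL_cons] at h1
          have h2 : ctL p' a = 0 := by
            unfold ctL
            rw [List.filter_eq_nil_iff.mpr]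
            · rfl
            · intro e he
              simp only [decide_eq_true_eq]
              exact not_lt.mpr (le_of_lt (hpa e he))
          simp [hcon, lt_irrefl] at h1
          omega
        refine List.Forall₂.cons hab ((ih hp' hq').mpr ⟨by simpa using hlen, fun z => ?_⟩)
        have h1 := hct z
        rw [ctL_cons, ctL_cons] at h1
        by_cases hza : a < z
        · by_cases hzb : b < z
          · simp [hza, hzb] at h1; omega
          · have : ctL q' z = 0 := by
              unfold ctL
              rw [List.filter_eq_nil_iff.mpr]
              · rfl
              · intro e he
                simp only [decide_eq_true_eq]
                exact not_lt.mpr (le_trans (not_lt.mp hzb) (hqb e he))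
            omega
        · have : ctL q' z = 0 := by
            unfold ctL
            rw [List.filter_eq_nil_iff.mpr]
            · rfl
            · intro e he
              simp only [decide_eq_true_eq]
              have hbe := hqb e he
              have := not_lt.mp hza
              omega
          omega
lemma card_firstVals {n : ℕ} (w : Equiv.Perm (Fin n)) (m : ℕ) :
    (firstVals w m).card = min m n := by
  unfold firstVals
  have hinj : Function.Injective (fun j : Fin n => (w j : ℕ)) :=
    fun i j hij => w.injective (Fin.val_injective hij)
  rw [Finset.card_image_of_injective _ hinj]
  have h : ((Finset.univ.filter (fun j : Fin n => (j : ℕ) < m)).image Fin.val)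
      = Finset.range (min m n) := by
    ext x
    simp only [Finset.mem_image, Finset.mem_filter, Finset.mem_univ, true_and,
      Finset.mem_range]
    constructor
    · rintro ⟨j, hj, rfl⟩
      exact lt_min hj j.isLt
    · intro hx
      exact ⟨⟨x, lt_of_lt_of_le hx (min_le_right m n)⟩, lt_of_lt_of_le hx (min_le_left m n), rfl⟩
  rw [← Finset.card_image_of_injective _ Fin.val_injective, h, Finset.card_range]

lemma firstVals_subset {n : ℕ} (w : Equiv.Perm (Fin n)) {k l : ℕ} (h : k ≤ l) :
    firstVals w k ⊆ firstVals w l := by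
  unfold firstVals
  apply Finset.image_subset_image
  intro j hj
  simp only [Finset.mem_filter, Finset.mem_univ, true_and] at hj ⊢
  omega

lemma memA_iff {n : ℕ} (w : Equiv.Perm (Fin n)) (m : ℕ) (a : List ℕ) :
    a ∈ A w m ↔ (a.Pairwise (· < ·) ∧ a.length = (firstVals w m).card ∧
      ∀ z, ct (firstVals w m) z ≤ ctL a z) := by
  unfold A
  have hws : (wSorted w m).Pairwise (· ≤ ·) := Finset.pairwise_sort _ _
  have hct : ∀ z, ctL (wSorted w m) z = ct (firstVals w m) z :=
    fun z => ctL_eq_ct (coe_sort_val _) z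
  have hlen : (wSorted w m).length = (firstVals w m).card := Finset.length_sort _
  constructor
  · rintro ⟨h1, h2⟩
    have hs : a.Pairwise (· < ·) := List.isChain_iff_pairwise.mp h1
    rcases (forall2_iff_ct hs hws).mp h2 with ⟨hl, hc⟩
    exact ⟨hs, by rw [hl, hlen], fun z => by rw [← hct z]; exact hc z⟩
  · rintro ⟨hs, hl, hc⟩
    refine ⟨List.isChain_iff_pairwise.mpr hs, (forall2_iff_ct hs hws).mpr ⟨by rw [hl, hlen], fun z => by rw [hct z]; exact hc z⟩⟩
section Swap

variable {k l : ℕ} {Fk Fl s t : Finset ℕ}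

/-- type-1 swap validity: `y ∈ t\s` with `y < x ∈ s\t`, no `t`-tight point on `(y,x]`. -/
lemma swap_valid1 (hW : ∀ z, ct Fl z ≤ ct s z) (hV : ∀ z, ct Fk z ≤ ct t z)
    (hx : x ∈ s \ t) (hy : y ∈ t \ s) (hyx : y < x)
    (hbt : ∀ z, y < z → z ≤ x → ct Fk z + 1 ≤ ct t z) :
    (∀ z, ct Fl z ≤ ct (insert y (s.erase x)) z) ∧
    (∀ z, ct Fk z ≤ ct (insert x (t.erase y)) z) := by
  rw [Finset.mem_sdiff] at hx hy
  have hxs := hx.1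
  have hyt := hy.1
  have hyns : y ∉ s.erase x := fun h => hy.2 (Finset.mem_of_mem_erase h)
  have hxnt : x ∉ t.erase y := fun h => hx.2 (Finset.mem_of_mem_erase h)
  constructor
  · intro z
    have e1 := ct_erase hxs z
    have e2 := ct_insert hyns z
    have h1 := hW z
    by_cases hxz : x < z <;> by_cases hyz : y < z <;>
      simp only [hxz, hyz, if_true, if_false] at e1 e2 ⊢ <;> omega
  · intro z
    have e1 := ct_erase hyt z
    have e2 := ct_insert hxnt z
    have h1 := hV z
    by_cases hxz : x < z <;> by_cases hyz : y < z <;>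
      simp only [hxz, hyz, if_true, if_false] at e1 e2 ⊢
    · omega
    · omega
    · -- y < z ≤ x : use no-tight
      have := hbt z hyz (not_lt.mp hxz)
      omega
    · omega

/-- type-2 swap validity: `x ∈ s\t` with `x < y ∈ t\s`, no `s`-tight point on `(x,y]`. -/
lemma swap_valid2 (hW : ∀ z, ct Fl z ≤ ct s z) (hV : ∀ z, ct Fk z ≤ ct t z)
    (hx : x ∈ s \ t) (hy : y ∈ t \ s) (hxy : x < y)
    (hat : ∀ z, x < z → z ≤ y → ct Fl z + 1 ≤ ct s z) :
    (∀ z, ct Fl z ≤ ct (insert y (s.erase x)) z) ∧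
    (∀ z, ct Fk z ≤ ct (insert x (t.erase y)) z) := by
  rw [Finset.mem_sdiff] at hx hy
  have hxs := hx.1
  have hyt := hy.1
  have hyns : y ∉ s.erase x := fun h => hy.2 (Finset.mem_of_mem_erase h)
  have hxnt : x ∉ t.erase y := fun h => hx.2 (Finset.mem_of_mem_erase h)
  constructor
  · intro z
    have e1 := ct_erase hxs z
    have e2 := ct_insert hyns z
    have h1 := hW z
    by_cases hxz : x < z <;> by_cases hyz : y < z <;>
      simp only [hxz, hyz, if_true, if_false] at e1 e2 ⊢
    · omega
    · -- x < z ≤ y : use no-tight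
      have := hat z hxz (not_lt.mp hyz)
      omega
    · omega
    · omega
  · intro z
    have e1 := ct_erase hyt z
    have e2 := ct_insert hxnt z
    have h1 := hV z
    by_cases hxz : x < z <;> by_cases hyz : y < z <;>
      simp only [hxz, hyz, if_true, if_false] at e1 e2 ⊢ <;> omega

lemma swap_exists (hkl : k ≤ l) (hsub : Fk ⊆ Fl) (hFk : Fk.card = k) (hFl : Fl.card = l)
    (hs : s.card = l) (ht : t.card = k)
    (hW : ∀ z, ct Fl z ≤ ct s z) (hV : ∀ z, ct Fk z ≤ ct t z)
    (hne : (t \ s).Nonempty) :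
    ∃ x ∈ s \ t, ∃ y ∈ t \ s,
      (∀ z, ct Fl z ≤ ct (insert y (s.erase x)) z) ∧
      (∀ z, ct Fk z ≤ ct (insert x (t.erase y)) z) := by
  -- basic notation
  have hEa : (s \ t).Nonempty := by
    by_contra hcon
    rw [Finset.not_nonempty_iff_eq_empty, Finset.sdiff_eq_empty_iff_subset] at hcon
    have : s = t := Finset.eq_of_subset_of_card_le hcon (by omega)
    rcases hne with ⟨e, he⟩
    rw [Finset.mem_sdiff, this] at he
    exact he.2 he.1
  set y := (t \ s).max' hne with hy_def
  have hy : y ∈ t \ s := (t \ s).max'_mem hne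
  have ymax : ∀ e ∈ t \ s, e ≤ y := fun e he => Finset.le_max' _ e he
  set B := (t \ s).card with hB_def
  have hB1 : 1 ≤ B := Finset.card_pos.mpr hne
  -- counting facts about t \ s
  have ctEb_all : ∀ z, y < z → ct (t \ s) z = B :=
    fun z hz => ct_all (fun e he => lt_of_le_of_lt (ymax e he) hz)
  have ctEb_up : ∀ z, z ≤ y → ct (t \ s) z + 1 ≤ B := by
    intro z hz
    have hsub2 : (t \ s).filter (· < z) ⊆ (t \ s).erase y := by
      intro e he
      rw [Finset.mem_filter] at he
      rw [Finset.mem_erase]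
      exact ⟨by omega, he.1⟩
    have := Finset.card_le_card hsub2
    rw [Finset.card_erase_of_mem hy] at this
    unfold ct
    omega
  -- splits
  have split_s : ∀ z, ct s z = ct (s ∩ t) z + ct (s \ t) z := fun z => ct_split s t z
  have split_t : ∀ z, ct t z = ct (s ∩ t) z + ct (t \ s) z := by
    intro z
    rw [ct_split t s z, Finset.inter_comm]
  have split_F : ∀ z, ct Fl z = ct Fk z + ct (Fl \ Fk) z := by
    intro z
    rw [ct_split Fl Fk z, Finset.inter_eq_right.mpr hsub]
  have g_mono : ∀ z z', z ≤ z' → ct (Fl \ Fk) z ≤ ct (Fl \ Fk) z' :=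
    fun z z' h => ct_mono_z h
  have hVW : ∀ z, ct Fk z ≤ ct Fl z := fun z => ct_subset hsub z
  -- the set of a-only elements below y
  set Qa := (s \ t).filter (· < y) with hQa_def
  set U := (s \ t).filter (fun e => y < e) with hU_def
  have hQaU : ∀ e ∈ s \ t, e < y ∨ y < e := by
    intro e he
    have : e ≠ y := by
      rw [Finset.mem_sdiff] at he hy
      intro h; rw [h] at he; exact hy.2 he.1
    omega
  have ctQa_all : ∀ z, y < z → ct (s \ t) z = Qa.card + ct U z := by
    intro z hz
    have h1 : ct (s \ t) z = ct Qa z + ct U z := by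
      have hdisj : Disjoint Qa U := by
        rw [Finset.disjoint_left]
        intro e h1 h2
        rw [hQa_def, Finset.mem_filter] at h1
        rw [hU_def, Finset.mem_filter] at h2
        omega
      have hun : Qa ∪ U = s \ t := by
        ext e
        simp only [Finset.mem_union, hQa_def, hU_def, Finset.mem_filter]
        constructor
        · rintro (h | h) <;> exact h.1
        · intro h
          rcases hQaU e h with h2 | h2
          · exact Or.inl ⟨h, h2⟩
          · exact Or.inr ⟨h, h2⟩
      rw [← hun, ct_union hdisj]
    rw [h1, ct_all (fun e he => by
      rw [hQa_def, Finset.mem_filter] at he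
      omega)]
  by_cases hQ : Qa.Nonempty
  · -- there is an a-only element below y
    set x0 := Qa.max' hQ with hx0_def
    have hx0Q : x0 ∈ Qa := Qa.max'_mem hQ
    have hx0 : x0 ∈ s \ t := by
      rw [hQa_def, Finset.mem_filter] at hx0Q; exact hx0Q.1
    have hx0y : x0 < y := by
      rw [hQa_def, Finset.mem_filter] at hx0Q; exact hx0Q.2
    have x0max : ∀ e ∈ Qa, e ≤ x0 := fun e he => Finset.le_max' _ e he
    -- count of Qa is everything of s\t below any z ∈ (x0, y]
    have ctQa_full : ∀ z, x0 < z → z ≤ y → ct (s \ t) z = Qa.card := by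
      intro z h1 h2
      have : ct (s \ t) z = ct Qa z + ct U z := by
        -- same dec as above; reprove quickly
        have hdisj : Disjoint Qa U := by
          rw [Finset.disjoint_left]
          intro e ha hb
          rw [hQa_def, Finset.mem_filter] at ha
          rw [hU_def, Finset.mem_filter] at hb
          omega
        have hun : Qa ∪ U = s \ t := by
          ext e
          simp only [Finset.mem_union, hQa_def, hU_def, Finset.mem_filter]
          constructor
          · rintro (h | h) <;> exact h.1
          · intro h
            rcases hQaU e h with h2 | h2
            · exact Or.inl ⟨h, h2⟩
            · exact Or.inr ⟨h, h2⟩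
        rw [← hun, ct_union hdisj]
      rw [this, ct_all (fun e he => by
          have := x0max e he
          omega),
        ct_none (fun e he => by
          rw [hU_def, Finset.mem_filter] at he
          omega)]
      omega
    by_cases htight : ∃ z, x0 < z ∧ z ≤ y ∧ ct Fl z = ct s z
    · obtain ⟨z2, hz2a, hz2b, hz2eq⟩ := htight
      by_cases hU2 : U.Nonempty
      · set x1 := U.min' hU2 with hx1_def
        have hx1U : x1 ∈ U := U.min'_mem hU2
        have hx1 : x1 ∈ s \ t := by
          rw [hU_def, Finset.mem_filter] at hx1U; exact hx1U.1
        have hyx1 : y < x1 := by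
          rw [hU_def, Finset.mem_filter] at hx1U; exact hx1U.2
        have x1min : ∀ e ∈ U, x1 ≤ e := fun e he => Finset.min'_le _ e he
        by_cases htight1 : ∃ z, y < z ∧ z ≤ x1 ∧ ct Fk z = ct t z
        · -- contradiction via monotonicity of ct (Fl \ Fk)
          exfalso
          obtain ⟨z1, hz1a, hz1b, hz1eq⟩ := htight1
          have hUz1 : ct U z1 = 0 := ct_none (fun e he => by
            have := x1min e he; omega)
          have hEa_z1 : ct (s \ t) z1 = Qa.card + ct U z1 := ctQa_all z1 hz1a
          have hEb_z1 : ct (t \ s) z1 = B := ctEb_all z1 hz1a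
          have hEa_z2 : ct (s \ t) z2 = Qa.card := ctQa_full z2 hz2a hz2b
          have hEb_z2 : ct (t \ s) z2 + 1 ≤ B := ctEb_up z2 hz2b
          have hmono := g_mono z2 z1 (by omega)
          have e1 := split_s z1
          have e2 := split_t z1
          have e3 := split_s z2
          have e4 := split_t z2
          have e5 := split_F z1
          have e6 := split_F z2
          have e7 := hW z1
          have e8 := hV z2
          omega
        · -- type-1 swap with (x1, y)
          push_neg at htight1
          refine ⟨x1, hx1, y, hy, swap_valid1 hW hV hx1 hy hyx1 ?_⟩
          intro z h1 h2
          have := htight1 z h1 h2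
          have := hV z
          omega
      · -- U empty: contradiction
        exfalso
        rw [Finset.not_nonempty_iff_eq_empty] at hU2
        have hEa_z2 : ct (s \ t) z2 = Qa.card := ctQa_full z2 hz2a hz2b
        have hQcard : Qa.card = (s \ t).card := by
          have : Qa ∪ U = s \ t := by
            ext e
            simp only [Finset.mem_union, hQa_def, hU_def, Finset.mem_filter]
            constructor
            · rintro (h | h) <;> exact h.1
            · intro h
              rcases hQaU e h with h2 | h2
              · exact Or.inl ⟨h, h2⟩
              · exact Or.inr ⟨h, h2⟩
          rw [hU2, Finset.union_empty] at this
          rw [this]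
        have hEb_z2 : ct (t \ s) z2 + 1 ≤ B := ctEb_up z2 hz2b
        have cardEa : (s \ t).card + (s ∩ t).card = l := by
          rw [← hs, ← Finset.card_sdiff_add_card_inter s t]
        have cardEb : B + (s ∩ t).card = k := by
          rw [hB_def, ← ht, ← Finset.card_sdiff_add_card_inter t s, Finset.inter_comm]
        have hgle : ct (Fl \ Fk) z2 ≤ l - k := by
          have h1 := ct_le_card (Fl \ Fk) z2
          have h2 : (Fl \ Fk).card = l - k := by
            rw [Finset.card_sdiff_of_subset hsub, hFk, hFl]
          omega
        have e3 := split_s z2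
        have e4 := split_t z2
        have e6 := split_F z2
        have e8 := hV z2
        omega
    · -- type-2 swap with (x0, y)
      push_neg at htight
      refine ⟨x0, hx0, y, hy, swap_valid2 hW hV hx0 hy hx0y ?_⟩
      intro z h1 h2
      have := htight z h1 h2
      have := hW z
      omega
  · -- Qa empty: type-1 swap with (min of s\t, y)
    rw [Finset.not_nonempty_iff_eq_empty] at hQ
    set x := (s \ t).min' hEa with hx_def
    have hxmem : x ∈ s \ t := (s \ t).min'_mem hEa
    have xmin : ∀ e ∈ s \ t, x ≤ e := fun e he => Finset.min'_le _ e he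
    have hyx : y < x := by
      rcases hQaU x hxmem with h | h
      · exfalso
        have : x ∈ Qa := by
          rw [hQa_def, Finset.mem_filter]; exact ⟨hxmem, h⟩
        rw [hQ] at this
        exact absurd this (Finset.notMem_empty x)
      · exact h
    refine ⟨x, hxmem, y, hy, swap_valid1 hW hV hxmem hy hyx ?_⟩
    intro z h1 h2
    have hEa_z : ct (s \ t) z = 0 := ct_none (fun e he => by
      have := xmin e he; omega)
    have hEb_z : ct (t \ s) z = B := ctEb_all z h1
    have e1 := split_s z
    have e2 := split_t z
    have e7 := hW z
    have e9 := hVW z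
    omega

end Swap
lemma count_nodup (m : Multiset ℕ) (hm : m.Nodup) (x : ℕ) :
    m.count x = if x ∈ m then 1 else 0 := by
  by_cases h : x ∈ m
  · rw [if_pos h]
    exact le_antisymm (Multiset.nodup_iff_count_le_one.mp hm x)
      (Multiset.one_le_count_iff_mem.mpr h)
  · rw [if_neg h, Multiset.count_eq_zero]
    exact h

lemma count_split {η₁ η₂ : Finset ℕ} (hd : Disjoint η₁ η₂) {p q : List ℕ}
    (hp : p.Nodup) (hq : q.Nodup)
    (hsum : (↑p + ↑q : Multiset ℕ) = η₁.val + 2 • η₂.val) (x : ℕ) :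
    (x ∈ η₂ ↔ x ∈ p ∧ x ∈ q) ∧ (x ∈ p ∨ x ∈ q → x ∈ η₁ ∨ x ∈ η₂) ∧
      (x ∈ η₁ → (x ∈ p ↔ ¬ x ∈ q)) := by
  have hd' := Finset.disjoint_left.mp hd
  have hcnt := congrArg (Multiset.count x) hsum
  rw [Multiset.count_add, Multiset.count_add, Multiset.count_nsmul,
    count_nodup _ (Multiset.coe_nodup.mpr hp) x,
    count_nodup _ (Multiset.coe_nodup.mpr hq) x,
    count_nodup _ η₁.nodup x, count_nodup _ η₂.nodup x] at hcnt
  simp only [Multiset.mem_coe, Finset.mem_val] at hcnt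
  by_cases hp1 : x ∈ p <;> by_cases hq1 : x ∈ q <;>
    by_cases h1 : x ∈ η₁ <;> by_cases h2 : x ∈ η₂ <;>
    simp only [hp1, hq1, h1, h2, if_true, if_false] at hcnt ⊢ <;>
    first
      | (exact absurd h2 (hd' h1))
      | omega
      | tauto

lemma sort_toFinset (σ : Finset ℕ) : (σ.sort (· ≤ ·)).toFinset = σ := by
  ext x
  rw [List.mem_toFinset, Finset.mem_sort]
/-- For `η ∈ B̃_{k,l}(w)`: if `k < l` then `η ∉ B_{k,l}(w)` iff `|η₂| = k`;
if `k = l` then `η ∉ B_{k,l}(w)` iff `|η₂| ≥ k - 1`. -/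
theorem stmt16 (n : ℕ) (w : Equiv.Perm (Fin n)) (k l : ℕ) (hkl : k ≤ l)
    (η₁ η₂ : Finset ℕ) (hd : Disjoint η₁ η₂)
    (hc : η₁.card + 2 * η₂.card = k + l)
    (htil : ∃ a ∈ A w l, ∃ b ∈ A w k, (↑a + ↑b : Multiset ℕ) = η₁.val + 2 • η₂.val) :
    (k < l → (¬ Bmem w k l (η₁.val + 2 • η₂.val) ↔ η₂.card = k)) ∧
    (k = l → (¬ Bmem w k l (η₁.val + 2 • η₂.val) ↔ k - 1 ≤ η₂.card)) := by
  classical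
  obtain ⟨a, haA, b, hbA, hsum⟩ := htil
  have ha' := (memA_iff w l a).mp haA
  have hb' := (memA_iff w k b).mp hbA
  -- dimension bookkeeping
  have hcards : a.length + b.length = k + l := by
    have h := congrArg Multiset.card hsum
    simp only [Multiset.card_add, Multiset.card_nsmul] at h
    have h0 : Multiset.card (↑a : Multiset ℕ) = a.length := rfl
    have h0' : Multiset.card (↑b : Multiset ℕ) = b.length := rfl
    have h1 : Multiset.card η₁.val = η₁.card := rfl
    have h2 : Multiset.card η₂.val = η₂.card := rfl
    rw [h0, h0', h1, h2] at h
    omega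
  have hFlc : (firstVals w l).card = min l n := card_firstVals w l
  have hFkc : (firstVals w k).card = min k n := card_firstVals w k
  have hlal : a.length = min l n := by rw [ha'.2.1, hFlc]
  have hlbk : b.length = min k n := by rw [hb'.2.1, hFkc]
  have hln : l ≤ n := by omega
  have hkn : k ≤ n := by omega
  have hFl : (firstVals w l).card = l := by omega
  have hFk : (firstVals w k).card = k := by omega
  -- general facts about presentations of η
  have pres : ∀ (p q : List ℕ), p ∈ A w l → q ∈ A w k →
      (↑p + ↑q : Multiset ℕ) = η₁.val + 2 • η₂.val →
      p.Pairwise (· < ·) ∧ q.Pairwise (· < ·) ∧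
      p.toFinset.card = l ∧ q.toFinset.card = k ∧
      η₂ = p.toFinset ∩ q.toFinset ∧
      (∀ x ∈ p.toFinset ∪ q.toFinset, x ∈ η₁ ∪ η₂) ∧
      (∀ x ∈ η₁, (x ∈ p.toFinset ↔ x ∉ q.toFinset)) ∧
      (∀ z, ct (firstVals w l) z ≤ ct p.toFinset z) ∧
      (∀ z, ct (firstVals w k) z ≤ ct q.toFinset z) := by
    intro p q hpA hqA hpq
    have hp := (memA_iff w l p).mp hpA
    have hq := (memA_iff w k q).mp hqA
    have hnp : p.Nodup := sorted_lt_nodup hp.1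
    have hnq : q.Nodup := sorted_lt_nodup hq.1
    have key := count_split hd hnp hnq hpq
    refine ⟨hp.1, hq.1, ?_, ?_, ?_, ?_, ?_, ?_, ?_⟩
    · rw [List.toFinset_card_of_nodup hnp, hp.2.1, hFl]
    · rw [List.toFinset_card_of_nodup hnq, hq.2.1, hFk]
    · ext x
      rw [Finset.mem_inter, List.mem_toFinset, List.mem_toFinset]
      exact (key x).1
    · intro x hx
      rw [Finset.mem_union, List.mem_toFinset, List.mem_toFinset] at hx
      rw [Finset.mem_union]
      exact (key x).2.1 hx
    · intro x hx
      rw [List.mem_toFinset, List.mem_toFinset]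
      exact (key x).2.2 hx
    · intro z
      have h1 := hp.2.2 z
      rwa [ctL_eq_ct (coe_toFinset_val hnp).symm] at h1
    · intro z
      have h1 := hq.2.2 z
      rwa [ctL_eq_ct (coe_toFinset_val hnq).symm] at h1
  -- construction of a second presentation given a nonempty swap
  have construct : ∀ (p q : List ℕ) (hpA : p ∈ A w l) (hqA : q ∈ A w k)
      (hpq : (↑p + ↑q : Multiset ℕ) = η₁.val + 2 • η₂.val),
      (q.toFinset \ p.toFinset).Nonempty →
      ∃ x ∈ p.toFinset \ q.toFinset, ∃ y ∈ q.toFinset \ p.toFinset,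
        ∃ p' ∈ A w l, ∃ q' ∈ A w k,
        (↑p' + ↑q' : Multiset ℕ) = η₁.val + 2 • η₂.val ∧
        p'.toFinset = insert y (p.toFinset.erase x) ∧
        q'.toFinset = insert x (q.toFinset.erase y) := by
    intro p q hpA hqA hpq hne
    obtain ⟨hps, hqs, hpc, hqc, heq2, hsup, hxor, hWp, hVq⟩ := pres p q hpA hqA hpq
    obtain ⟨x, hx, y, hy, hWa, hVb⟩ :=
      swap_exists hkl (firstVals_subset w hkl) hFk hFl hpc hqc hWp hVq hne
    have hxs : x ∈ p.toFinset := (Finset.mem_sdiff.mp hx).1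
    have hxnt : x ∉ q.toFinset := (Finset.mem_sdiff.mp hx).2
    have hyt : y ∈ q.toFinset := (Finset.mem_sdiff.mp hy).1
    have hyns : y ∉ p.toFinset := (Finset.mem_sdiff.mp hy).2
    have hxy : x ≠ y := fun h => hxnt (h ▸ hyt)
    set s' := insert y (p.toFinset.erase x) with hs'_def
    set t' := insert x (q.toFinset.erase y) with ht'_def
    have hyne : y ∉ p.toFinset.erase x := fun h => hyns (Finset.mem_of_mem_erase h)
    have hxne : x ∉ q.toFinset.erase y := fun h => hxnt (Finset.mem_of_mem_erase h)
    have hs'c : s'.card = l := by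
      rw [hs'_def, Finset.card_insert_of_notMem hyne, Finset.card_erase_of_mem hxs, hpc]
      have : 1 ≤ l := by
        rcases Nat.eq_zero_or_pos l with h | h
        · exfalso
          have : p.toFinset.card = 0 := by rw [hpc, h]
          rw [Finset.card_eq_zero] at this
          rw [this] at hxs
          exact absurd hxs (Finset.notMem_empty x)
        · exact h
      omega
    have ht'c : t'.card = k := by
      rw [ht'_def, Finset.card_insert_of_notMem hxne, Finset.card_erase_of_mem hyt, hqc]
      have : 1 ≤ k := by
        rcases Nat.eq_zero_or_pos k with h | h
        · exfalso
          have : q.toFinset.card = 0 := by rw [hqc, h]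
          rw [Finset.card_eq_zero] at this
          rw [this] at hyt
          exact absurd hyt (Finset.notMem_empty y)
        · exact h
      omega
    refine ⟨x, hx, y, hy, s'.sort (· ≤ ·), ?_, t'.sort (· ≤ ·), ?_, ?_, sort_toFinset s', sort_toFinset t'⟩
    · rw [memA_iff]
      exact ⟨s'.sortedLT_sort.pairwise, by rw [Finset.length_sort, hs'c, hFl],
        fun z => by rw [ctL_eq_ct (coe_sort_val s')]; exact hWa z⟩
    · rw [memA_iff]
      exact ⟨t'.sortedLT_sort.pairwise, by rw [Finset.length_sort, ht'c, hFk],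
        fun z => by rw [ctL_eq_ct (coe_sort_val t')]; exact hVb z⟩
    · rw [coe_sort_val s', coe_sort_val t']
      have hv1 : s'.val = y ::ₘ (p.toFinset.val.erase x) := by
        rw [hs'_def, Finset.insert_val_of_notMem hyne, Finset.erase_val]
      have hv2 : t'.val = x ::ₘ (q.toFinset.val.erase y) := by
        rw [ht'_def, Finset.insert_val_of_notMem hxne, Finset.erase_val]
      rw [hv1, hv2]
      have h3 : x ::ₘ p.toFinset.val.erase x = p.toFinset.val :=
        Multiset.cons_erase (Finset.mem_val.mpr hxs)
      have h4 : y ::ₘ q.toFinset.val.erase y = q.toFinset.val :=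
        Multiset.cons_erase (Finset.mem_val.mpr hyt)
      have h5 : y ::ₘ p.toFinset.val.erase x + x ::ₘ q.toFinset.val.erase y
          = p.toFinset.val + q.toFinset.val := by
        conv_rhs => rw [← h3, ← h4]
        apply Multiset.ext.mpr
        intro e
        simp only [Multiset.count_add, Multiset.count_cons]
        split_ifs <;> omega
      rw [h5, coe_toFinset_val (sorted_lt_nodup hps), coe_toFinset_val (sorted_lt_nodup hqs)]
      exact hpq
  refine ⟨?_, ?_⟩
  · -- case k < l
    intro hkl'
    constructor
    · -- ¬ Bmem → η₂.card = k
      intro hnB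
      by_contra hm
      apply hnB
      obtain ⟨hps, hqs, hpc, hqc, heq2, hsup, hxor, hWp, hVq⟩ := pres a b haA hbA hsum
      have hm2 : η₂.card = (a.toFinset ∩ b.toFinset).card := by rw [heq2]
      have hmle : (a.toFinset ∩ b.toFinset).card ≤ k := by
        calc (a.toFinset ∩ b.toFinset).card ≤ b.toFinset.card :=
              Finset.card_le_card Finset.inter_subset_right
        _ = k := hqc
      have hcd : (b.toFinset \ a.toFinset).card + (a.toFinset ∩ b.toFinset).card = k := by
        rw [Finset.inter_comm, Finset.card_sdiff_add_card_inter, hqc]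
      have hne : (b.toFinset \ a.toFinset).Nonempty := by
        rw [← Finset.card_pos]
        omega
      obtain ⟨x, hx, y, hy, p', hp'A, q', hq'A, hsum', hp't, hq't⟩ :=
        construct a b haA hbA hsum hne
      have hq'len : q'.length = k := by
        rw [((memA_iff w k q').mp hq'A).2.1, hFk]
      have hp'len : p'.length = l := by
        rw [((memA_iff w l p').mp hp'A).2.1, hFl]
      have halen : a.length = l := by omega
      have hblen : b.length = k := by omega
      refine ⟨a, haA, b, hbA, p', hp'A, q', hq'A, hsum, hsum', ?_, ?_, ?_, ?_⟩
      · -- a ≠ p'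
        intro h
        have h2 : a.toFinset = p'.toFinset := congrArg List.toFinset h
        rw [hp't] at h2
        have hxs : x ∈ a.toFinset := (Finset.mem_sdiff.mp hx).1
        rw [h2, Finset.mem_insert] at hxs
        rcases hxs with h3 | h3
        · have hyt : y ∈ b.toFinset := (Finset.mem_sdiff.mp hy).1
          have hxnt : x ∉ b.toFinset := (Finset.mem_sdiff.mp hx).2
          exact hxnt (h3 ▸ hyt)
        · exact (Finset.notMem_erase x _) h3
      · -- a ≠ q' : lengths differ
        intro h
        have := congrArg List.length h
        omega
      · -- b ≠ p' : lengths differ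
        intro h
        have := congrArg List.length h
        omega
      · -- b ≠ q'
        intro h
        have h2 : b.toFinset = q'.toFinset := congrArg List.toFinset h
        rw [hq't] at h2
        have hyt : y ∈ b.toFinset := (Finset.mem_sdiff.mp hy).1
        rw [h2, Finset.mem_insert] at hyt
        rcases hyt with h3 | h3
        · have hxs : x ∈ a.toFinset := (Finset.mem_sdiff.mp hx).1
          have hyns : y ∉ a.toFinset := (Finset.mem_sdiff.mp hy).2
          exact hyns (h3 ▸ hxs)
        · exact (Finset.notMem_erase y _) h3
    · -- η₂.card = k → ¬ Bmem
      intro hm hB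
      obtain ⟨p, hpA, q, hqA, p', hp'A, q', hq'A, hpq, hpq', hne1, hne2, hne3, hne4⟩ := hB
      obtain ⟨hps, hqs, hpc, hqc, heq2, -, -, -, -⟩ := pres p q hpA hqA hpq
      obtain ⟨hps', hqs', hpc', hqc', heq2', -, -, -, -⟩ := pres p' q' hp'A hq'A hpq'
      have h1 : η₂ ⊆ q.toFinset := by rw [heq2]; exact Finset.inter_subset_right
      have h2 : η₂ ⊆ q'.toFinset := by rw [heq2']; exact Finset.inter_subset_right
      have h3 : η₂ = q.toFinset :=
        Finset.eq_of_subset_of_card_le h1 (by rw [hqc, hm])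
      have h4 : η₂ = q'.toFinset :=
        Finset.eq_of_subset_of_card_le h2 (by rw [hqc', hm])
      exact hne4 (eq_of_toFinset_eq hqs hqs' (h3 ▸ h4))
  · -- case k = l
    intro hkeq
    subst hkeq
    constructor
    · -- ¬ Bmem → k - 1 ≤ η₂.card
      intro hnB
      by_contra hm
      push_neg at hm
      apply hnB
      obtain ⟨hps, hqs, hpc, hqc, heq2, hsup, hxor, hWp, hVq⟩ := pres a b haA hbA hsum
      have hm2 : η₂.card = (a.toFinset ∩ b.toFinset).card := by rw [heq2]
      have hcd1 : (b.toFinset \ a.toFinset).card + (a.toFinset ∩ b.toFinset).card = k := by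
        rw [Finset.inter_comm, Finset.card_sdiff_add_card_inter, hqc]
      have hcd2 : (a.toFinset \ b.toFinset).card + (a.toFinset ∩ b.toFinset).card = k := by
        rw [Finset.card_sdiff_add_card_inter, hpc]
      have hne : (b.toFinset \ a.toFinset).Nonempty := by
        rw [← Finset.card_pos]
        omega
      obtain ⟨x, hx, y, hy, p', hp'A, q', hq'A, hsum', hp't, hq't⟩ :=
        construct a b haA hbA hsum hne
      -- extra elements witnessing distinctness
      have hcd3 : 2 ≤ (a.toFinset \ b.toFinset).card := by omega
      have hcd4 : 2 ≤ (b.toFinset \ a.toFinset).card := by omega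
      have hxmem : x ∈ a.toFinset \ b.toFinset := hx
      have hymem : y ∈ b.toFinset \ a.toFinset := hy
      obtain ⟨e, he⟩ : ((a.toFinset \ b.toFinset).erase x).Nonempty := by
        rw [← Finset.card_pos, Finset.card_erase_of_mem hxmem]
        omega
      obtain ⟨f, hf⟩ : ((b.toFinset \ a.toFinset).erase y).Nonempty := by
        rw [← Finset.card_pos, Finset.card_erase_of_mem hymem]
        omega
      rw [Finset.mem_erase, Finset.mem_sdiff] at he hf
      refine ⟨a, haA, b, hbA, p', hp'A, q', hq'A, hsum, hsum', ?_, ?_, ?_, ?_⟩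
      · -- a ≠ p'
        intro h
        have h2 : a.toFinset = p'.toFinset := congrArg List.toFinset h
        rw [hp't] at h2
        have hxs : x ∈ a.toFinset := (Finset.mem_sdiff.mp hx).1
        rw [h2, Finset.mem_insert] at hxs
        rcases hxs with h3 | h3
        · have hyt : y ∈ b.toFinset := (Finset.mem_sdiff.mp hy).1
          have hxnt : x ∉ b.toFinset := (Finset.mem_sdiff.mp hx).2
          exact hxnt (h3 ▸ hyt)
        · exact (Finset.notMem_erase x _) h3
      · -- a ≠ q' : via e
        intro h
        have h2 : a.toFinset = q'.toFinset := congrArg List.toFinset h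
        rw [hq't] at h2
        have hes : e ∈ a.toFinset := he.2.1
        rw [h2, Finset.mem_insert] at hes
        rcases hes with h3 | h3
        · -- e = x, but e ≠ x
          exact he.1 h3
        · exact he.2.2 (Finset.mem_of_mem_erase h3)
      · -- b ≠ p' : via f
        intro h
        have h2 : b.toFinset = p'.toFinset := congrArg List.toFinset h
        rw [hp't] at h2
        have hfs : f ∈ b.toFinset := hf.2.1
        rw [h2, Finset.mem_insert] at hfs
        rcases hfs with h3 | h3
        · exact hf.1 h3
        · exact hf.2.2 (Finset.mem_of_mem_erase h3)
      · -- b ≠ q'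
        intro h
        have h2 : b.toFinset = q'.toFinset := congrArg List.toFinset h
        rw [hq't] at h2
        have hyt : y ∈ b.toFinset := (Finset.mem_sdiff.mp hy).1
        rw [h2, Finset.mem_insert] at hyt
        rcases hyt with h3 | h3
        · have hxs : x ∈ a.toFinset := (Finset.mem_sdiff.mp hx).1
          have hyns : y ∉ a.toFinset := (Finset.mem_sdiff.mp hy).2
          exact hyns (h3 ▸ hxs)
        · exact (Finset.notMem_erase y _) h3
    · -- k - 1 ≤ η₂.card → ¬ Bmem
      intro hm hB
      obtain ⟨p, hpA, q, hqA, p', hp'A, q', hq'A, hpq, hpq', hne1, hne2, hne3, hne4⟩ := hB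
      have f1 := pres p q hpA hqA hpq
      have f2 := pres p' q' hp'A hq'A hpq'
      have hmle : η₂.card ≤ k := by
        have h1 : η₂ ⊆ q.toFinset := by
          rw [f1.2.2.2.2.1]; exact Finset.inter_subset_right
        have h2 := Finset.card_le_card h1
        rw [f1.2.2.2.1] at h2
        exact h2
      by_cases hmk : η₂.card = k
      · have h1 : η₂ ⊆ p.toFinset := by rw [f1.2.2.2.2.1]; exact Finset.inter_subset_left
        have h1' : η₂ ⊆ p'.toFinset := by rw [f2.2.2.2.2.1]; exact Finset.inter_subset_left
        have h3 : η₂ = p.toFinset := Finset.eq_of_subset_of_card_le h1 (by rw [f1.2.2.1, hmk])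
        have h3' : η₂ = p'.toFinset := Finset.eq_of_subset_of_card_le h1' (by rw [f2.2.2.1, hmk])
        exact hne1 (eq_of_toFinset_eq f1.1 f2.1 (h3 ▸ h3'))
      · have hm1 : η₂.card = k - 1 := by omega
        have hk1 : 1 ≤ k := by omega
        have hc2 : η₁.card = 2 := by omega
        obtain ⟨u, v, huv, hη₁⟩ := Finset.card_eq_two.mp hc2
        have shape : ∀ (r r' : List ℕ), r ∈ A w k → r' ∈ A w k →
            (↑r + ↑r' : Multiset ℕ) = η₁.val + 2 • η₂.val →
            (r.toFinset = insert u η₂ ∧ r'.toFinset = insert v η₂) ∨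
            (r.toFinset = insert v η₂ ∧ r'.toFinset = insert u η₂) := by
          intro r r' hrA hr'A hrr
          obtain ⟨hrs, hrs', hrc, hrc', heq2, hsup, hxor, -, -⟩ := pres r r' hrA hr'A hrr
          have hsubP : η₂ ⊆ r.toFinset := by rw [heq2]; exact Finset.inter_subset_left
          have hsubQ : η₂ ⊆ r'.toFinset := by rw [heq2]; exact Finset.inter_subset_right
          have hPd : (r.toFinset \ η₂).card = 1 := by
            rw [Finset.card_sdiff_of_subset hsubP, hrc, hm1]; omega
          have hQd : (r'.toFinset \ η₂).card = 1 := by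
            rw [Finset.card_sdiff_of_subset hsubQ, hrc', hm1]; omega
          obtain ⟨w0, hw0⟩ := Finset.card_eq_one.mp hPd
          obtain ⟨w1, hw1⟩ := Finset.card_eq_one.mp hQd
          have hw0m : w0 ∈ r.toFinset \ η₂ := by rw [hw0]; exact Finset.mem_singleton_self w0
          have hw1m : w1 ∈ r'.toFinset \ η₂ := by rw [hw1]; exact Finset.mem_singleton_self w1
          rw [Finset.mem_sdiff] at hw0m hw1m
          have hPu : r.toFinset = insert w0 η₂ := by
            rw [← Finset.union_sdiff_of_subset hsubP, hw0, Finset.union_comm, Finset.insert_eq]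
          have hQu : r'.toFinset = insert w1 η₂ := by
            rw [← Finset.union_sdiff_of_subset hsubQ, hw1, Finset.union_comm, Finset.insert_eq]
          have hw0η : w0 ∈ η₁ := by
            have := hsup w0 (Finset.mem_union_left _ hw0m.1)
            rw [Finset.mem_union] at this
            tauto
          have hw1η : w1 ∈ η₁ := by
            have := hsup w1 (Finset.mem_union_right _ hw1m.1)
            rw [Finset.mem_union] at this
            tauto
          have hw01 : w0 ≠ w1 := by
            intro hEq
            have hh : w0 ∈ r.toFinset ∩ r'.toFinset :=
              Finset.mem_inter.mpr ⟨hw0m.1, hEq ▸ hw1m.1⟩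
            rw [← heq2] at hh
            exact hw0m.2 hh
          rw [hη₁, Finset.mem_insert, Finset.mem_singleton] at hw0η hw1η
          rcases hw0η with h0 | h0 <;> rcases hw1η with h1 | h1
          · exact absurd (h0.trans h1.symm) hw01
          · exact Or.inl ⟨by rw [hPu, h0], by rw [hQu, h1]⟩
          · exact Or.inr ⟨by rw [hPu, h0], by rw [hQu, h1]⟩
          · exact absurd (h0.trans h1.symm) hw01
        rcases shape p q hpA hqA hpq with ⟨hP, hQ⟩ | ⟨hP, hQ⟩ <;>
          rcases shape p' q' hp'A hq'A hpq' with ⟨hP', hQ'⟩ | ⟨hP', hQ'⟩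
        · exact hne1 (eq_of_toFinset_eq f1.1 f2.1 (hP.trans hP'.symm))
        · exact hne2 (eq_of_toFinset_eq f1.1 f2.2.1 (hP.trans hQ'.symm))
        · exact hne2 (eq_of_toFinset_eq f1.1 f2.2.1 (hP.trans hQ'.symm))
        · exact hne1 (eq_of_toFinset_eq f1.1 f2.1 (hP.trans hP'.symm))
end
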